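/- arXiv:math/0502453 — 3 statements merged into one kernel-verified Lean document; each statement's English description precedes it below -/
import Mathlib

section
/- Let g be a real measurable function on a probability space (Δ, μ) whose distribution is in the nonstandard domain of attraction of the Gaussian law N(0,1), and let L(x) = ∫ 1_{|g|≤x}·g² dμ. Then, uniformly over bounded measurable functions w : Δ → ℂ, ∫ (e^{itg} − 1 − itg)·w dμ = −(t²/2)·∫ 1_{|g| ≤ 1/|t|}·g²·w dμ + ‖w‖_∞·o(t²·L(1/|t|)) as t → 0. Precisely: for every ε > 0 there exists δ > 0 such that for all t with 0 < |t| < δ and all bounded measurable w : Δ → ℂ, |∫ (e^{itg} − 1 − itg)·w dμ + (t²/2)·∫ 1_{|g| ≤ 1/|t|}·g²·w dμ| ≤ ε·‖w‖_∞·t²·L(1/|t|). -/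
open MeasureTheory Filter Set
open scoped ENNReal NNReal Topology Classical

/-- A function `f : ℝ → ℝ` is slowly varying if `f (λ x) / f x → 1` as `x → ∞`,
for every `λ > 0`. -/
def SlowlyVarying (f : ℝ → ℝ) : Prop :=
  ∀ lam : ℝ, 0 < lam → Filter.Tendsto (fun x => f (lam * x) / f x) Filter.atTop (nhds 1)

section ADaux

lemma AD_taylor3 (u : ℝ) (hu : |u| ≤ 1) :
    ‖Complex.exp (Complex.I * u) - 1 - Complex.I * u + (u:ℂ)^2/2‖ ≤ |u|^3 := by
  have hx : ‖Complex.I * (u:ℂ)‖ ≤ 1 := by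
    simpa [Complex.norm_real] using hu
  have h := Complex.exp_bound hx (n := 3) (by norm_num)
  have hsum : ∑ m ∈ Finset.range 3, (Complex.I * u) ^ m / (m.factorial : ℂ)
      = 1 + Complex.I * u - (u:ℂ)^2/2 := by
    simp [Finset.sum_range_succ]
    have : (Complex.I * u) ^ 2 = -(u:ℂ)^2 := by
      rw [mul_pow, Complex.I_sq]; ring
    rw [this]; ring
  rw [hsum] at h
  have habs : ‖Complex.I * (u:ℂ)‖ = |u| := by
    simp [Complex.norm_real]
  rw [habs] at h
  have hfinal : ‖Complex.exp (Complex.I * u) - (1 + Complex.I * u - (u:ℂ)^2/2)‖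
      ≤ |u|^3 := by
    refine h.trans ?_
    norm_num [Nat.factorial]
    nlinarith [pow_nonneg (abs_nonneg u) 3]
  have heq : Complex.exp (Complex.I * u) - 1 - Complex.I * u + (u:ℂ)^2/2
      = Complex.exp (Complex.I * u) - (1 + Complex.I * u - (u:ℂ)^2/2) := by ring
  rw [heq]; exact hfinal

lemma AD_taylor2 (u : ℝ) (hu : |u| ≤ 1) :
    ‖Complex.exp (Complex.I * u) - 1 - Complex.I * u‖ ≤ u^2 := by
  have hx : ‖Complex.I * (u:ℂ)‖ ≤ 1 := by
    simpa [Complex.norm_real] using hu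
  have h := Complex.exp_bound hx (n := 2) (by norm_num)
  have hsum : ∑ m ∈ Finset.range 2, (Complex.I * u) ^ m / (m.factorial : ℂ)
      = 1 + Complex.I * u := by
    simp [Finset.sum_range_succ]
  rw [hsum] at h
  have habs : ‖Complex.I * (u:ℂ)‖ = |u| := by
    simp [Complex.norm_real]
  rw [habs] at h
  have hfinal : ‖Complex.exp (Complex.I * u) - (1 + Complex.I * u)‖ ≤ u^2 := by
    refine h.trans ?_
    norm_num [Nat.factorial]
    nlinarith [sq_nonneg u, sq_abs u]
  have heq : Complex.exp (Complex.I * u) - 1 - Complex.I * u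
      = Complex.exp (Complex.I * u) - (1 + Complex.I * u) := by ring
  rw [heq]; exact hfinal

lemma AD_lin (u : ℝ) :
    ‖Complex.exp (Complex.I * u) - 1 - Complex.I * u‖ ≤ 2 + |u| := by
  have h1 : ‖Complex.exp (Complex.I * u)‖ = 1 := by
    rw [Complex.norm_exp]
    simp
  calc ‖Complex.exp (Complex.I * u) - 1 - Complex.I * u‖
      ≤ ‖Complex.exp (Complex.I * u) - 1‖ + ‖Complex.I * (u:ℂ)‖ := norm_sub_le _ _
    _ ≤ (‖Complex.exp (Complex.I * u)‖ + ‖(1:ℂ)‖) + ‖Complex.I * (u:ℂ)‖ := by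
        gcongr; exact norm_sub_le _ _
    _ ≤ 2 + |u| := by
        rw [h1]
        simp [Complex.norm_real]
        norm_num

/-- `e^{itv} - 1 - itv`. -/
noncomputable def ADphi (t v : ℝ) : ℂ :=
  Complex.exp (Complex.I * t * v) - 1 - Complex.I * t * v

/-- `e^{itv} - 1 - itv + (tv)²/2`. -/
noncomputable def ADpsi (t v : ℝ) : ℂ :=
  ADphi t v + (t:ℂ)^2/2 * (v:ℂ)^2

lemma ADphi_eq (t v : ℝ) : ADphi t v
    = Complex.exp (Complex.I * ((t*v : ℝ) : ℂ)) - 1 - Complex.I * ((t*v : ℝ) : ℂ) := by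
  unfold ADphi
  push_cast
  simp only [mul_assoc]

lemma ADpsi_eq (t v : ℝ) : ADpsi t v
    = Complex.exp (Complex.I * ((t*v : ℝ) : ℂ)) - 1 - Complex.I * ((t*v : ℝ) : ℂ)
      + (((t*v : ℝ) : ℂ))^2/2 := by
  unfold ADpsi ADphi
  push_cast
  simp only [mul_assoc]
  ring

lemma ADpsi_norm (t v : ℝ) (h : |t*v| ≤ 1) : ‖ADpsi t v‖ ≤ |t*v|^3 := by
  rw [ADpsi_eq]; exact AD_taylor3 (t*v) h

lemma ADphi_norm_quad (t v : ℝ) (h : |t*v| ≤ 1) : ‖ADphi t v‖ ≤ (t*v)^2 := by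
  rw [ADphi_eq]; exact AD_taylor2 (t*v) h

lemma ADphi_norm_lin (t v : ℝ) : ‖ADphi t v‖ ≤ 2 + |t*v| := by
  rw [ADphi_eq]; exact AD_lin (t*v)

lemma AD_norm_sq (t v : ℝ) : ‖(t:ℂ)^2/2 * (v:ℂ)^2‖ = t^2/2 * v^2 := by
  have h : ((t:ℂ)^2/2*(v:ℂ)^2) = (((t^2/2*v^2 : ℝ)):ℂ) := by push_cast; ring
  rw [h, Complex.norm_real, Real.norm_eq_abs, abs_of_nonneg (by positivity)]

lemma ADphi_cont (t : ℝ) : Continuous (ADphi t) := by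
  unfold ADphi; fun_prop

lemma ADpsi_cont (t : ℝ) : Continuous (ADpsi t) := by
  unfold ADpsi
  exact (ADphi_cont t).add (by fun_prop)

end ADaux

set_option maxHeartbeats 1000000 in
/-- Lemma of Aaronson and Denker (`lem_aaronson_denker`): if the distribution of `g` is in
the nonstandard domain of attraction of `N(0,1)` (i.e. `L(x) = ∫ 1_{|g|≤x} g²` is unbounded
and slowly varying), then uniformly over bounded measurable `w`,
`∫ (e^{itg} - 1 - itg) w = -(t²/2) ∫ 1_{|g|≤1/|t|} g² w + ‖w‖_∞ o(t² L(1/|t|))` as `t → 0`. -/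
theorem aaronson_denker_lemma
    {Δ : Type*} [MeasurableSpace Δ] (μ : Measure Δ) (hμ : IsProbabilityMeasure μ)
    (g : Δ → ℝ) (hg : Measurable g)
    (L : ℝ → ℝ) (hL_def : ∀ x : ℝ, L x = ∫ y in {y : Δ | |g y| ≤ x}, (g y) ^ 2 ∂μ)
    (hL_unbdd : ∀ M : ℝ, ∃ x : ℝ, M < L x)
    (hL_sv : SlowlyVarying L) :
    ∀ ε : ℝ, 0 < ε → ∃ δ : ℝ, 0 < δ ∧ ∀ t : ℝ, 0 < |t| → |t| < δ →
      ∀ w : Δ → ℂ, Measurable w → ∀ M : ℝ, (∀ x, ‖w x‖ ≤ M) →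
      ‖(∫ x, (Complex.exp (Complex.I * t * g x) - 1 - Complex.I * t * g x) * w x ∂μ) +
          ((t : ℂ) ^ 2 / 2) * ∫ x in {y : Δ | |g y| ≤ 1 / |t|}, (g x : ℂ) ^ 2 * w x ∂μ‖
        ≤ ε * M * t ^ 2 * L (1 / |t|) := by
  intro ε hε
  classical
  -- basic facts about the truncation sets and L
  have hAmeas : ∀ x : ℝ, MeasurableSet {y : Δ | |g y| ≤ x} :=
    fun x => measurableSet_le hg.abs measurable_const
  have hInt2 : ∀ x : ℝ, IntegrableOn (fun y => (g y)^2) {y : Δ | |g y| ≤ x} μ := by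
    intro x
    refine Measure.integrableOn_of_bounded (M := x^2) (measure_ne_top μ _)
      ((hg.pow_const 2).aestronglyMeasurable) ?_
    filter_upwards [ae_restrict_mem (hAmeas x)] with y hy
    have hy' : |g y| ≤ x := hy
    rw [Real.norm_eq_abs, abs_of_nonneg (sq_nonneg _), ← sq_abs]
    exact pow_le_pow_left₀ (abs_nonneg _) hy' 2
  have hLmono : Monotone L := by
    intro x x' hxx'
    rw [hL_def x, hL_def x']
    refine setIntegral_mono_set (hInt2 x') ?_ ?_
    · exact Filter.Eventually.of_forall fun y => sq_nonneg _
    · exact HasSubset.Subset.eventuallyLE fun y hy => le_trans hy hxx'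
  have hLnonneg : ∀ x, 0 ≤ L x := fun x => by
    rw [hL_def]; exact setIntegral_nonneg (hAmeas x) fun y _ => sq_nonneg _
  -- choice of constants
  set η : ℝ := min (1/2) (ε/27) with hηdef
  have hη0 : 0 < η := lt_min (by norm_num) (by positivity)
  have hη2 : η ≤ 1/2 := min_le_left _ _
  have hηε : η ≤ ε/27 := min_le_right _ _
  set a : ℝ := min 1 (ε/3) with hadef
  have ha0 : 0 < a := lt_min one_pos (by positivity)
  have ha1 : a ≤ 1 := min_le_left _ _
  have haε : a ≤ ε/3 := min_le_right _ _
  -- the threshold x₀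
  obtain ⟨x₁, hx₁⟩ := hL_unbdd 0
  have h2ev : ∀ᶠ x in Filter.atTop, L (2*x) / L x ≤ 1 + η :=
    Filter.Tendsto.eventually_le_const (by linarith) (hL_sv 2 (by norm_num))
  have hiev : ∀ᶠ x in Filter.atTop, L ((1/a)*x) / L x ≤ 1 + η :=
    Filter.Tendsto.eventually_le_const (by linarith) (hL_sv (1/a) (by positivity))
  obtain ⟨x₀', hx₀'⟩ := Filter.eventually_atTop.mp (h2ev.and hiev)
  set x₀ : ℝ := max (max x₀' x₁) 1 with hx₀def
  have hx₀1 : (1:ℝ) ≤ x₀ := le_max_right _ _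
  have hx₀0 : (0:ℝ) < x₀ := lt_of_lt_of_le one_pos hx₀1
  have hLpos : ∀ x, x₀ ≤ x → 0 < L x := fun x hx =>
    lt_of_lt_of_le hx₁ (hLmono (le_trans (le_trans (le_max_right _ _) (le_max_left _ _)) hx))
  have hdouble : ∀ x, x₀ ≤ x → L (2*x) ≤ (1+η) * L x := by
    intro x hx
    have h := (hx₀' x (le_trans (le_trans (le_max_left _ _) (le_max_left _ _)) hx)).1
    have hp := hLpos x hx
    rw [div_le_iff₀ hp] at h
    linarith
  have hstep : ∀ x, x₀ ≤ x → L ((1/a)*x) ≤ (1+η) * L x := by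
    intro x hx
    have h := (hx₀' x (le_trans (le_trans (le_max_left _ _) (le_max_left _ _)) hx)).2
    have hp := hLpos x hx
    rw [div_le_iff₀ hp] at h
    linarith
  -- the tail estimate
  have htail : ∀ x, x₀ ≤ x →
      ∫⁻ y in {y : Δ | |g y| ≤ x}ᶜ, ‖g y‖₊ ∂μ ≤ ENNReal.ofReal (4*η*L x/x) := by
    intro x hx
    have hx0 : 0 < x := lt_of_lt_of_le hx₀0 hx
    set S : ℕ → Set Δ := fun k => {y : Δ | 2^k * x < |g y| ∧ |g y| ≤ 2^(k+1) * x} with hSdef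
    have hSmeas : ∀ k, MeasurableSet (S k) := fun k =>
      (measurableSet_lt measurable_const hg.abs).inter (measurableSet_le hg.abs measurable_const)
    have hSsub : ∀ k, S k ⊆ {y : Δ | |g y| ≤ 2^(k+1)*x} := fun k y hy => hy.2
    have hcover : {y : Δ | |g y| ≤ x}ᶜ = ⋃ k, S k := by
      ext y
      simp only [hSdef, Set.mem_compl_iff, Set.mem_setOf_eq, Set.mem_iUnion, not_le]
      constructor
      · intro hy
        have hex : ∃ k : ℕ, |g y| ≤ 2^(k+1) * x := by
          obtain ⟨n, hn⟩ := pow_unbounded_of_one_lt (|g y| / x) (one_lt_two (α := ℝ))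
          refine ⟨n, ?_⟩
          rw [div_lt_iff₀ hx0] at hn
          have h2 : (2:ℝ)^n ≤ 2^(n+1) := pow_le_pow_right₀ one_le_two (Nat.le_succ n)
          nlinarith
        refine ⟨Nat.find hex, ?_, Nat.find_spec hex⟩
        rcases Nat.eq_zero_or_pos (Nat.find hex) with h0 | hpos
        · rw [h0]; simpa using hy
        · have hmin := Nat.find_min hex (Nat.sub_lt hpos one_pos)
          push_neg at hmin
          have heq : (Nat.find hex - 1) + 1 = Nat.find hex := Nat.succ_pred_eq_of_pos hpos
          rwa [heq] at hmin
      · rintro ⟨k, hk1, hk2⟩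
        have h1 : (1:ℝ) ≤ 2^k := one_le_pow₀ one_le_two
        nlinarith
    have hdisj : Pairwise (Function.onFun Disjoint S) := by
      have key : ∀ j k, j < k → Disjoint (S j) (S k) := by
        intro j k hjk
        rw [Set.disjoint_left]
        rintro y ⟨hj1, hj2⟩ ⟨hk1, hk2⟩
        have hpow : (2:ℝ)^(j+1) ≤ 2^k := pow_le_pow_right₀ one_le_two hjk
        nlinarith [mul_le_mul_of_nonneg_right hpow hx0.le]
      intro j k hjk
      rcases hjk.lt_or_gt with h | h
      · exact key _ _ h
      · exact (key _ _ h).symm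
    have hLk : ∀ k : ℕ, x₀ ≤ 2^k * x := by
      intro k
      have h1 : (1:ℝ) ≤ 2^k := one_le_pow₀ one_le_two
      nlinarith
    have hpowL : ∀ k : ℕ, L (2^k * x) ≤ (1+η)^k * L x := by
      intro k
      induction k with
      | zero => simp
      | succ n ih =>
        have h1 : L (2^(n+1) * x) ≤ (1+η) * L (2^n * x) := by
          have h := hdouble (2^n * x) (hLk n)
          rw [show 2*(2^n*x) = 2^(n+1)*x by ring] at h
          exact h
        calc L (2^(n+1)*x) ≤ (1+η) * L (2^n * x) := h1
          _ ≤ (1+η) * ((1+η)^n * L x) := mul_le_mul_of_nonneg_left ih (by linarith)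
          _ = (1+η)^(n+1) * L x := by ring
    have hgeom : ∀ k : ℕ, L (2^(k+1)*x) - L (2^k*x) ≤ η * (1+η)^k * L x := by
      intro k
      have h1 : L (2^(k+1) * x) ≤ (1+η) * L (2^k * x) := by
        have h := hdouble (2^k * x) (hLk k)
        rw [show 2*(2^k*x) = 2^(k+1)*x by ring] at h
        exact h
      have h2 := hpowL k
      have h3 := hLnonneg (2^k * x)
      nlinarith [mul_le_mul_of_nonneg_left h2 hη0.le]
    have h7 : 0 ≤ η * L x / x := div_nonneg (mul_nonneg hη0.le (hLnonneg x)) hx0.le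
    have hpiece : ∀ k : ℕ, ∫⁻ y in S k, ‖g y‖₊ ∂μ
        ≤ ENNReal.ofReal ((η * L x / x) * ((1+η)/2)^k) := by
      intro k
      have hck : (0:ℝ) < 2^k * x := by positivity
      have hintk : IntegrableOn (fun y => (g y)^2) (S k) μ :=
        (hInt2 (2^(k+1)*x)).mono_set (hSsub k)
      have hble : ∫⁻ y in S k, ‖g y‖₊ ∂μ
          ≤ ∫⁻ y in S k, ENNReal.ofReal ((g y)^2 / (2^k * x)) ∂μ := by
        refine setLIntegral_mono (((hg.pow_const 2).div_const _).ennreal_ofReal) ?_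
        rintro y ⟨hy1, hy2⟩
        rw [← enorm_eq_nnnorm, Real.enorm_eq_ofReal_abs]
        apply ENNReal.ofReal_le_ofReal
        rw [le_div_iff₀ hck]
        nlinarith [mul_le_mul_of_nonneg_left hy1.le (abs_nonneg (g y)), sq_abs (g y)]
      have heq1 : ∫⁻ y in S k, ENNReal.ofReal ((g y)^2/(2^k*x)) ∂μ
          = ENNReal.ofReal (∫ y in S k, (g y)^2/(2^k*x) ∂μ) :=
        (ofReal_integral_eq_lintegral_ofReal (hintk.div_const _)
          (Filter.Eventually.of_forall fun y => by positivity)).symm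
      have hsub2 : {y : Δ | |g y| ≤ 2^k*x} ⊆ {y : Δ | |g y| ≤ 2^(k+1)*x} := by
        intro y hy
        have h2 : (2:ℝ)^k*x ≤ 2^(k+1)*x := by
          have h : (2:ℝ)^k ≤ 2^(k+1) := by
            apply pow_le_pow_right₀ one_le_two; omega
          nlinarith [mul_le_mul_of_nonneg_right h hx0.le]
        exact le_trans hy h2
      have hSdiffk : S k = {y : Δ | |g y| ≤ 2^(k+1)*x} \ {y : Δ | |g y| ≤ 2^k*x} := by
        ext y
        simp only [hSdef, Set.mem_setOf_eq, Set.mem_diff, not_le]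
        tauto
      have hIS : ∫ y in S k, (g y)^2 ∂μ = L (2^(k+1)*x) - L (2^k*x) := by
        rw [hSdiffk, integral_diff (hAmeas _) (hInt2 _) hsub2, ← hL_def, ← hL_def]
      have hIS2 : ∫ y in S k, (g y)^2/(2^k*x) ∂μ = (L (2^(k+1)*x) - L (2^k*x))/(2^k*x) := by
        rw [integral_div, hIS]
      refine le_trans hble ?_
      rw [heq1, hIS2]
      apply ENNReal.ofReal_le_ofReal
      have h5 : (η * L x / x) * ((1+η)/2)^k = η * (1+η)^k * L x / (2^k * x) := by
        rw [div_pow]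
        field_simp
      rw [h5]
      exact (div_le_div_iff_of_pos_right hck).mpr (hgeom k)
    have hr0 : (0:ℝ) ≤ (1+η)/2 := by linarith
    have hr1 : (1+η)/2 < 1 := by linarith
    have hsummable : Summable (fun k : ℕ => (η * L x / x) * ((1+η)/2)^k) :=
      (summable_geometric_of_lt_one hr0 hr1).mul_left _
    calc ∫⁻ y in {y : Δ | |g y| ≤ x}ᶜ, ‖g y‖₊ ∂μ
        = ∑' k, ∫⁻ y in S k, ‖g y‖₊ ∂μ := by
          rw [hcover, lintegral_iUnion hSmeas hdisj]
      _ ≤ ∑' k, ENNReal.ofReal ((η*L x/x) * ((1+η)/2)^k) := ENNReal.tsum_le_tsum hpiece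
      _ = ENNReal.ofReal (∑' k, (η*L x/x) * ((1+η)/2)^k) :=
          (ENNReal.ofReal_tsum_of_nonneg (fun k => mul_nonneg h7 (pow_nonneg hr0 k))
            hsummable).symm
      _ ≤ ENNReal.ofReal (4*η*L x/x) := by
          apply ENNReal.ofReal_le_ofReal
          rw [tsum_mul_left, tsum_geometric_of_lt_one hr0 hr1]
          have h6 : (1 - (1+η)/2)⁻¹ ≤ 4 := by
            have ha : (0:ℝ) < 1/4 := by norm_num
            have hb : (1:ℝ)/4 ≤ 1 - (1+η)/2 := by linarith
            have := inv_anti₀ ha hb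
            calc (1 - (1+η)/2)⁻¹ ≤ ((1:ℝ)/4)⁻¹ := this
              _ = 4 := by norm_num
          calc (η*L x/x) * (1-(1+η)/2)⁻¹ ≤ (η*L x/x)*4 := mul_le_mul_of_nonneg_left h6 h7
            _ = 4*η*L x/x := by ring

  -- integrability of g
  have hgint : Integrable g μ := by
    have h1 : IntegrableOn g {y : Δ | |g y| ≤ x₀} μ := by
      refine Measure.integrableOn_of_bounded (M := x₀) (measure_ne_top μ _)
        hg.aestronglyMeasurable ?_
      filter_upwards [ae_restrict_mem (hAmeas x₀)] with y hy
      exact hy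
    have h2 : IntegrableOn g {y : Δ | |g y| ≤ x₀}ᶜ μ :=
      ⟨hg.aestronglyMeasurable.restrict,
        lt_of_le_of_lt (htail x₀ le_rfl) ENNReal.ofReal_lt_top⟩
    have h3 := h1.union h2
    rwa [Set.union_compl_self, integrableOn_univ] at h3
  -- real tail estimate
  have htailreal : ∀ x, x₀ ≤ x → ∫ y in {y : Δ | |g y| ≤ x}ᶜ, |g y| ∂μ ≤ 4*η*L x/x := by
    intro x hx
    have hx0 : 0 < x := lt_of_lt_of_le hx₀0 hx
    have heq : ∫ y in {y : Δ | |g y| ≤ x}ᶜ, |g y| ∂μ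
        = (∫⁻ y in {y : Δ | |g y| ≤ x}ᶜ, ‖g y‖₊ ∂μ).toReal := by
      rw [integral_eq_lintegral_of_nonneg_ae
        (Filter.Eventually.of_forall fun y => abs_nonneg _)
        hg.abs.aestronglyMeasurable.restrict]
      congr 1
      refine lintegral_congr fun y => ?_
      exact (Real.enorm_eq_ofReal_abs _).symm
    rw [heq]
    have h4 : (0:ℝ) ≤ 4*η*L x/x := by
      apply div_nonneg _ hx0.le
      nlinarith [hLnonneg x, hη0.le]
    calc (∫⁻ y in {y : Δ | |g y| ≤ x}ᶜ, ‖g y‖₊ ∂μ).toReal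
        ≤ (ENNReal.ofReal (4*η*L x/x)).toReal :=
          ENNReal.toReal_mono ENNReal.ofReal_ne_top (htail x hx)
      _ = 4*η*L x/x := ENNReal.toReal_ofReal h4
  -- the choice of δ
  refine ⟨a / x₀, div_pos ha0 hx₀0, ?_⟩
  intro t ht htδ w hw M hM
  have hM0 : 0 ≤ M := by
    have hne : Nonempty Δ := by
      by_contra h
      rw [not_nonempty_iff] at h
      have h1 : μ Set.univ = 1 := measure_univ
      rw [Set.univ_eq_empty_iff.mpr h, measure_empty] at h1
      exact zero_ne_one h1
    obtain ⟨y⟩ := hne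
    exact le_trans (norm_nonneg _) (hM y)
  set s : ℝ := 1 / |t| with hsdef
  have hs0 : 0 < s := by rw [hsdef]; positivity
  have hts : |t| * s = 1 := by rw [hsdef]; field_simp
  have hax : x₀ ≤ a * s := by
    rw [lt_div_iff₀ hx₀0] at htδ
    rw [hsdef, mul_one_div, le_div_iff₀ ht]
    nlinarith
  have hsx : x₀ ≤ s := le_trans hax
    (by nlinarith [mul_nonneg (show (0:ℝ) ≤ 1 - a by linarith) hs0.le])
  have has : a * s ≤ s := by nlinarith [mul_nonneg (show (0:ℝ) ≤ 1 - a by linarith) hs0.le]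
  show ‖(∫ x, ADphi t (g x) * w x ∂μ) +
      ((t:ℂ)^2/2) * ∫ x in {y : Δ | |g y| ≤ s}, ((g x : ℂ))^2 * w x ∂μ‖ ≤ ε * M * t^2 * L s
  -- measurability and integrability
  have hφgm : Measurable (fun y => ADphi t (g y)) := (ADphi_cont t).measurable.comp hg
  have hψgm : Measurable (fun y => ADpsi t (g y)) := (ADpsi_cont t).measurable.comp hg
  have hφwint : Integrable (fun y => ADphi t (g y) * w y) μ := by
    have hdom : Integrable (fun y => 2*M + (M * |t|) * |g y|) μ :=
      (integrable_const _).add ((hgint.abs).const_mul _)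
    refine hdom.mono' ((hφgm.mul hw).aestronglyMeasurable) ?_
    refine Filter.Eventually.of_forall fun y => ?_
    rw [norm_mul]
    calc ‖ADphi t (g y)‖ * ‖w y‖ ≤ (2 + |t * g y|) * M := by
          apply mul_le_mul (ADphi_norm_lin t (g y)) (hM y) (norm_nonneg _)
          positivity
      _ = 2*M + (M * |t|) * |g y| := by rw [abs_mul]; ring
  have hψwint : IntegrableOn (fun y => ADpsi t (g y) * w y) {y : Δ | |g y| ≤ s} μ := by
    refine Measure.integrableOn_of_bounded (M := ((2 + |t| * s) + t^2/2*s^2) * M)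
      (measure_ne_top μ _) ((hψgm.mul hw).aestronglyMeasurable) ?_
    filter_upwards [ae_restrict_mem (hAmeas s)] with y hy
    have hy' : |g y| ≤ s := hy
    have hgy2 : (g y)^2 ≤ s^2 := by
      rw [← sq_abs]; exact pow_le_pow_left₀ (abs_nonneg _) hy' 2
    rw [norm_mul]
    have h1 : ‖ADpsi t (g y)‖ ≤ (2 + |t| * s) + t^2/2*s^2 := by
      calc ‖ADpsi t (g y)‖
          ≤ ‖ADphi t (g y)‖ + ‖(t:ℂ)^2/2 * ((g y : ℂ))^2‖ := norm_add_le _ _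
        _ ≤ (2 + |t * g y|) + t^2/2*(g y)^2 := by
            gcongr
            · exact ADphi_norm_lin t (g y)
            · rw [AD_norm_sq]
        _ ≤ (2 + |t| * s) + t^2/2*s^2 := by
            have : |t * g y| ≤ |t| * s := by
              rw [abs_mul]
              exact mul_le_mul_of_nonneg_left hy' (abs_nonneg t)
            have h2 : t^2/2*(g y)^2 ≤ t^2/2*s^2 :=
              mul_le_mul_of_nonneg_left hgy2 (by positivity)
            linarith
    apply mul_le_mul h1 (hM y) (norm_nonneg _)
    positivity
  have hg2wint : IntegrableOn (fun y => ((g y : ℂ))^2 * w y) {y : Δ | |g y| ≤ s} μ := by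
    refine Measure.integrableOn_of_bounded (M := s^2 * M) (measure_ne_top μ _)
      (((Complex.measurable_ofReal.comp hg).pow_const 2).mul hw).aestronglyMeasurable ?_
    filter_upwards [ae_restrict_mem (hAmeas s)] with y hy
    have hy' : |g y| ≤ s := hy
    rw [norm_mul]
    have h1 : ‖((g y : ℂ))^2‖ = (g y)^2 := by
      have h2 : ((g y : ℂ))^2 = (((g y)^2 : ℝ) : ℂ) := by push_cast; ring
      rw [h2, Complex.norm_real, Real.norm_eq_abs, abs_of_nonneg (sq_nonneg _)]
    rw [h1]
    apply mul_le_mul _ (hM y) (norm_nonneg _) (sq_nonneg s)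
    rw [← sq_abs]; exact pow_le_pow_left₀ (abs_nonneg _) hy' 2
  -- splitting of the integral
  have hsub3 : {y : Δ | |g y| ≤ a*s} ⊆ {y : Δ | |g y| ≤ s} := fun y hy => le_trans hy has
  have hdisj2 : Disjoint {y : Δ | |g y| ≤ a*s}
      ({y : Δ | |g y| ≤ s} \ {y : Δ | |g y| ≤ a*s}) := disjoint_sdiff_self_right
  have hunion : {y : Δ | |g y| ≤ a*s} ∪ ({y : Δ | |g y| ≤ s} \ {y : Δ | |g y| ≤ a*s})
      = {y : Δ | |g y| ≤ s} := Set.union_diff_cancel hsub3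
  have hkey : (∫ y, ADphi t (g y) * w y ∂μ)
      + ((t:ℂ)^2/2) * ∫ y in {y : Δ | |g y| ≤ s}, ((g y : ℂ))^2 * w y ∂μ
      = (∫ y in {y : Δ | |g y| ≤ a*s}, ADpsi t (g y) * w y ∂μ)
        + (∫ y in {y : Δ | |g y| ≤ s} \ {y : Δ | |g y| ≤ a*s}, ADpsi t (g y) * w y ∂μ)
        + (∫ y in {y : Δ | |g y| ≤ s}ᶜ, ADphi t (g y) * w y ∂μ) := by
    have e1 : (∫ y, ADphi t (g y) * w y ∂μ)
        = (∫ y in {y : Δ | |g y| ≤ s}, ADphi t (g y) * w y ∂μ)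
          + (∫ y in {y : Δ | |g y| ≤ s}ᶜ, ADphi t (g y) * w y ∂μ) :=
      (integral_add_compl (hAmeas s) hφwint).symm
    have e2 : ((t:ℂ)^2/2) * ∫ y in {y : Δ | |g y| ≤ s}, ((g y : ℂ))^2 * w y ∂μ
        = ∫ y in {y : Δ | |g y| ≤ s}, ((t:ℂ)^2/2) * (((g y : ℂ))^2 * w y) ∂μ :=
      (integral_const_mul _ _).symm
    have e3 : (∫ y in {y : Δ | |g y| ≤ s}, ADphi t (g y) * w y ∂μ)
        + ∫ y in {y : Δ | |g y| ≤ s}, ((t:ℂ)^2/2) * (((g y : ℂ))^2 * w y) ∂μ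
        = ∫ y in {y : Δ | |g y| ≤ s}, ADpsi t (g y) * w y ∂μ := by
      rw [← integral_add hφwint.integrableOn (hg2wint.const_mul _)]
      refine integral_congr_ae (Filter.Eventually.of_forall fun y => ?_)
      unfold ADpsi
      ring
    have e4 := setIntegral_union hdisj2 ((hAmeas s).diff (hAmeas (a*s)))
      (hψwint.mono_set hsub3) (hψwint.mono_set Set.diff_subset)
    rw [hunion] at e4
    rw [e4] at e3
    rw [e1, e2]
    linear_combination e3
  rw [hkey]
  -- bound on the first region
  have hb1 : ‖∫ y in {y : Δ | |g y| ≤ a*s}, ADpsi t (g y) * w y ∂μ‖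
      ≤ a * M * t^2 * L s := by
    have hbound : ∀ᵐ y ∂(μ.restrict {y : Δ | |g y| ≤ a*s}),
        ‖ADpsi t (g y) * w y‖ ≤ (a*M*t^2) * (g y)^2 := by
      filter_upwards [ae_restrict_mem (hAmeas (a*s))] with y hy
      have hy' : |g y| ≤ a*s := hy
      have htg : |t * g y| ≤ a := by
        rw [abs_mul]
        calc |t| * |g y| ≤ |t| * (a*s) := mul_le_mul_of_nonneg_left hy' (abs_nonneg t)
          _ = a * (|t| * s) := by ring
          _ = a := by rw [hts, mul_one]
      have htg1 : |t * g y| ≤ 1 := le_trans htg ha1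
      rw [norm_mul]
      calc ‖ADpsi t (g y)‖ * ‖w y‖ ≤ |t * g y|^3 * M :=
          mul_le_mul (ADpsi_norm t (g y) htg1) (hM y) (norm_nonneg _) (by positivity)
        _ = ((t*g y)^2 * |t*g y|) * M := by rw [pow_succ, sq_abs]
        _ ≤ ((t*g y)^2 * a) * M := by
            apply mul_le_mul_of_nonneg_right _ hM0
            exact mul_le_mul_of_nonneg_left htg (sq_nonneg _)
        _ = (a*M*t^2) * (g y)^2 := by ring
    calc ‖∫ y in {y : Δ | |g y| ≤ a*s}, ADpsi t (g y) * w y ∂μ‖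
        ≤ ∫ y in {y : Δ | |g y| ≤ a*s}, (a*M*t^2) * (g y)^2 ∂μ :=
          norm_integral_le_of_norm_le ((hInt2 (a*s)).const_mul _) hbound
      _ = (a*M*t^2) * ∫ y in {y : Δ | |g y| ≤ a*s}, (g y)^2 ∂μ := integral_const_mul _ _
      _ = (a*M*t^2) * L (a*s) := by rw [← hL_def]
      _ ≤ a * M * t^2 * L s := by
          have h2 := hLmono has
          have h3 : (0:ℝ) ≤ a*M*t^2 := by
            have := mul_nonneg (mul_nonneg ha0.le hM0) (sq_nonneg t)
            linarith
          calc (a*M*t^2) * L (a*s) ≤ (a*M*t^2) * L s := mul_le_mul_of_nonneg_left h2 h3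
            _ = a * M * t^2 * L s := by ring
  -- bound on the middle region
  have hLdiffbound : L s - L (a*s) ≤ η * L s := by
    have h := hstep (a*s) hax
    rw [show (1/a)*(a*s) = s from by field_simp] at h
    have h2 : L (a*s) ≤ L s := hLmono has
    nlinarith [mul_le_mul_of_nonneg_left h2 hη0.le]
  have hb2 : ‖∫ y in {y : Δ | |g y| ≤ s} \ {y : Δ | |g y| ≤ a*s}, ADpsi t (g y) * w y ∂μ‖
      ≤ (3/2) * M * t^2 * (η * L s) := by
    have hbound : ∀ᵐ y ∂(μ.restrict ({y : Δ | |g y| ≤ s} \ {y : Δ | |g y| ≤ a*s})),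
        ‖ADpsi t (g y) * w y‖ ≤ ((3/2)*M*t^2) * (g y)^2 := by
      filter_upwards [ae_restrict_mem ((hAmeas s).diff (hAmeas (a*s)))] with y hy
      obtain ⟨hy1, _⟩ := hy
      have hy1' : |g y| ≤ s := hy1
      have htg1 : |t * g y| ≤ 1 := by
        rw [abs_mul]
        calc |t| * |g y| ≤ |t| * s := mul_le_mul_of_nonneg_left hy1' (abs_nonneg t)
          _ = 1 := hts
      rw [norm_mul]
      have hψb : ‖ADpsi t (g y)‖ ≤ (3/2) * (t * g y)^2 := by
        calc ‖ADpsi t (g y)‖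
            ≤ ‖ADphi t (g y)‖ + ‖(t:ℂ)^2/2 * ((g y : ℂ))^2‖ := norm_add_le _ _
          _ ≤ (t*g y)^2 + t^2/2*(g y)^2 := by
              gcongr
              · exact ADphi_norm_quad t (g y) htg1
              · rw [AD_norm_sq]
          _ = (3/2)*(t*g y)^2 := by ring
      calc ‖ADpsi t (g y)‖ * ‖w y‖ ≤ ((3/2)*(t*g y)^2) * M :=
          mul_le_mul hψb (hM y) (norm_nonneg _) (by positivity)
        _ = ((3/2)*M*t^2)*(g y)^2 := by ring
    have hIdiff : ∫ y in {y : Δ | |g y| ≤ s} \ {y : Δ | |g y| ≤ a*s}, (g y)^2 ∂μ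
        = L s - L (a*s) := by
      rw [integral_diff (hAmeas (a*s)) (hInt2 s) hsub3, ← hL_def, ← hL_def]
    calc ‖∫ y in {y : Δ | |g y| ≤ s} \ {y : Δ | |g y| ≤ a*s}, ADpsi t (g y) * w y ∂μ‖
        ≤ ∫ y in {y : Δ | |g y| ≤ s} \ {y : Δ | |g y| ≤ a*s}, ((3/2)*M*t^2) * (g y)^2 ∂μ :=
          norm_integral_le_of_norm_le (((hInt2 s).mono_set Set.diff_subset).const_mul _) hbound
      _ = ((3/2)*M*t^2) * (L s - L (a*s)) := by rw [integral_const_mul, hIdiff]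
      _ ≤ (3/2) * M * t^2 * (η * L s) := by
          apply mul_le_mul_of_nonneg_left hLdiffbound
          have := mul_nonneg (mul_nonneg (show (0:ℝ) ≤ 3/2 by norm_num) hM0) (sq_nonneg t)
          linarith
  -- bound on the tail region
  have hb3 : ‖∫ y in {y : Δ | |g y| ≤ s}ᶜ, ADphi t (g y) * w y ∂μ‖
      ≤ 12 * M * η * t^2 * L s := by
    have hbound : ∀ᵐ y ∂(μ.restrict ({y : Δ | |g y| ≤ s}ᶜ)),
        ‖ADphi t (g y) * w y‖ ≤ (3*M * |t|) * |g y| := by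
      filter_upwards [ae_restrict_mem (hAmeas s).compl] with y hy
      have hy' : s < |g y| := not_le.mp hy
      have h1 : 1 < |t| * |g y| := by
        calc (1:ℝ) = |t| * s := hts.symm
          _ < |t| * |g y| := mul_lt_mul_of_pos_left hy' ht
      rw [norm_mul]
      calc ‖ADphi t (g y)‖ * ‖w y‖ ≤ (2 + |t * g y|) * M :=
          mul_le_mul (ADphi_norm_lin t (g y)) (hM y) (norm_nonneg _) (by positivity)
        _ ≤ (3 * (|t| * |g y|)) * M := by
            apply mul_le_mul_of_nonneg_right _ hM0
            rw [abs_mul]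
            linarith
        _ = (3*M * |t|) * |g y| := by ring
    have habs_int : IntegrableOn (fun y => |g y|) ({y : Δ | |g y| ≤ s}ᶜ) μ :=
      (hgint.abs).integrableOn
    have h3M : (0:ℝ) ≤ 3*M * |t| := by
      have := mul_nonneg (mul_nonneg (show (0:ℝ) ≤ 3 by norm_num) hM0) (abs_nonneg t)
      linarith
    have hinv : 1/s = |t| := by rw [hsdef, one_div_one_div]
    calc ‖∫ y in {y : Δ | |g y| ≤ s}ᶜ, ADphi t (g y) * w y ∂μ‖
        ≤ ∫ y in {y : Δ | |g y| ≤ s}ᶜ, (3*M * |t|) * |g y| ∂μ :=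
          norm_integral_le_of_norm_le (habs_int.const_mul _) hbound
      _ = (3*M * |t|) * ∫ y in {y : Δ | |g y| ≤ s}ᶜ, |g y| ∂μ := integral_const_mul _ _
      _ ≤ (3*M * |t|) * (4*η*L s/s) := mul_le_mul_of_nonneg_left (htailreal s hsx) h3M
      _ = 3*M * |t| * (4*η*L s * (1/s)) := by ring
      _ = 3*M * |t| * (4*η*L s * |t|) := by rw [hinv]
      _ = 12 * M * η * t^2 * L s := by
          rw [pow_two, ← abs_mul_abs_self t]; ring
  -- putting everything together
  have hbase : 0 ≤ M * t^2 * L s := mul_nonneg (mul_nonneg hM0 (sq_nonneg t)) (hLnonneg s)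
  calc ‖(∫ y in {y : Δ | |g y| ≤ a*s}, ADpsi t (g y) * w y ∂μ)
        + (∫ y in {y : Δ | |g y| ≤ s} \ {y : Δ | |g y| ≤ a*s}, ADpsi t (g y) * w y ∂μ)
        + (∫ y in {y : Δ | |g y| ≤ s}ᶜ, ADphi t (g y) * w y ∂μ)‖
      ≤ ‖∫ y in {y : Δ | |g y| ≤ a*s}, ADpsi t (g y) * w y ∂μ‖
        + ‖∫ y in {y : Δ | |g y| ≤ s} \ {y : Δ | |g y| ≤ a*s}, ADpsi t (g y) * w y ∂μ‖
        + ‖∫ y in {y : Δ | |g y| ≤ s}ᶜ, ADphi t (g y) * w y ∂μ‖ := norm_add₃_le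
    _ ≤ a * M * t^2 * L s + (3/2) * M * t^2 * (η * L s) + 12 * M * η * t^2 * L s :=
        add_le_add (add_le_add hb1 hb2) hb3
    _ ≤ ε * M * t^2 * L s := by
        nlinarith [mul_le_mul_of_nonneg_right haε hbase, mul_le_mul_of_nonneg_right hηε hbase]
end

section
/- Let U : Δ → Δ be an expanding Young tower with μ(Δ_n) ≤ C·ρⁿ for some ρ < 1, let τ < 1, and let ε > 0 satisfy e^{ε}·ρ < 1. For x ∈ Δ let ω(x) be its height and let Ψ_n(x) be the number of indices 1 ≤ k ≤ n with U^k x ∈ Δ₀ (the number of returns to the basis between time 1 and n). Then there exist C' > 0 and θ < 1 such that for every n ∈ ℕ, ∫_{U^{−n}Δ₀} τ^{Ψ_n}·e^{ε·ω} dμ ≤ C'·θⁿ. -/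
open MeasureTheory Filter Set
open scoped ENNReal NNReal Topology Classical

/-- An expanding Young tower on a probability space `(Δ, μ)`, for the map `U`. -/
structure YoungTower {Δ : Type*} [MeasurableSpace Δ] (μ : Measure Δ) (U : Δ → Δ) where
  /-- the height of column `p` -/
  r : ℕ → ℕ
  r_pos : ∀ p, 0 < r p
  /-- `cell k p` is the element `Δ_{k,p}` of the partition -/
  cell : ℕ → ℕ → Set Δ
  cell_meas : ∀ k p, MeasurableSet (cell k p)
  cell_empty : ∀ k p, r p ≤ k → cell k p = ∅
  cell_cover : ∀ x : Δ, ∃ p k, k < r p ∧ x ∈ cell k p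
  cell_disj : ∀ k p k' p', (k, p) ≠ (k', p') → Disjoint (cell k p) (cell k' p')
  measurable_U : Measurable U
  measurePreserving_U : MeasurePreserving U μ μ
  isProb : IsProbabilityMeasure μ
  /-- `U` is a measurable isomorphism from `Δ_{k,p}` onto `Δ_{k+1,p}` when `k < r p - 1`... -/
  map_up : ∀ p k, k + 1 < r p → Set.BijOn U (cell k p) (cell (k + 1) p)
  /-- ... which is measure preserving -/
  map_up_measure : ∀ p k, k + 1 < r p → ∀ A : Set Δ, A ⊆ cell k p → MeasurableSet A →
      μ (U '' A) = μ A
  /-- `U` is a measurable isomorphism from `Δ_{r_p - 1, p}` onto the basis `⋃ m, Δ_{0,m}` -/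
  map_top : ∀ p, Set.BijOn U (cell (r p - 1) p) (⋃ m, cell 0 m)
  /-- the height function `ω` -/
  height : Δ → ℕ
  height_spec : ∀ k p, ∀ x ∈ cell k p, height x = k
  /-- the projection `π₀` to the basis -/
  proj : Δ → Δ
  proj_spec : ∀ k p, ∀ x ∈ cell k p, proj x ∈ cell 0 p ∧ U^[k] (proj x) = x
  /-- the separation time -/
  s : Δ → Δ → ℕ
  s_eq_zero : ∀ x y : Δ, (¬ ∃ p k, k < r p ∧ x ∈ cell k p ∧ y ∈ cell k p) → s x y = 0
  s_mid : ∀ p k, k + 1 < r p → ∀ x ∈ cell k p, ∀ y ∈ cell k p, s x y = s (U x) (U y)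
  s_top : ∀ p, ∀ x ∈ cell (r p - 1) p, ∀ y ∈ cell (r p - 1) p, s x y = 1 + s (U x) (U y)
  /-- the inverse of the Jacobian of `U` -/
  J : Δ → ℝ
  J_meas : Measurable J
  J_pos : ∀ x, 0 < J x
  J_spec : ∀ k p, ∀ A : Set Δ, A ⊆ cell k p → MeasurableSet A →
      μ (U '' A) = ∫⁻ x in A, ENNReal.ofReal (J x)⁻¹ ∂μ
  /-- distortion constants -/
  Cd : ℝ
  β : ℝ
  Cd_pos : 0 < Cd
  β_pos : 0 < β
  β_lt_one : β < 1
  distortion : ∀ k p, ∀ x ∈ cell k p, ∀ y ∈ cell k p,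
      |1 - J x / J y| ≤ Cd * β ^ (s (U x) (U y))

namespace YoungTower

variable {Δ : Type*} [MeasurableSpace Δ] {μ : Measure Δ} {U : Δ → Δ}

/-- The basis `Δ₀` of the tower. -/
def base (T : YoungTower μ U) : Set Δ := ⋃ m, T.cell 0 m

/-- The set `Δ_n` of points at height `n`. -/
def level (T : YoungTower μ U) (n : ℕ) : Set Δ := ⋃ p, T.cell n p

/-- Exponentially small tails: `μ (Δ_n) ≤ C ρ^n`. -/
def ExpTails (T : YoungTower μ U) (C ρ : ℝ) : Prop :=
  ∀ n : ℕ, μ (T.level n) ≤ ENNReal.ofReal (C * ρ ^ n)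

/-- `x` and `y` lie in the same element of the partition. -/
def SameCell (T : YoungTower μ U) (x y : Δ) : Prop :=
  ∃ p k, k < T.r p ∧ x ∈ T.cell k p ∧ y ∈ T.cell k p

/-- A function is locally Hölder (with constants `Cg`, `τ`) if
`|g x - g y| ≤ Cg τ^(s x y)` for `x, y` in the same partition element. -/
def LocallyHolder (T : YoungTower μ U) (g : Δ → ℝ) (Cg τ : ℝ) : Prop :=
  ∀ x y : Δ, T.SameCell x y → |g x - g y| ≤ Cg * τ ^ (T.s x y)

/-- The first return time to the basis. -/
noncomputable def retTime (T : YoungTower μ U) (x : Δ) : ℕ :=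
  sInf {n : ℕ | 0 < n ∧ U^[n] x ∈ T.base}

/-- The induced (first return) map on the basis. -/
noncomputable def retMap (T : YoungTower μ U) (x : Δ) : Δ := U^[T.retTime x] x

/-- `Ψ_n x`: the number of returns of `x` to the basis between times `1` and `n`. -/
noncomputable def retCount (T : YoungTower μ U) (n : ℕ) (x : Δ) : ℕ :=
  ((Finset.Icc 1 n).filter fun k => U^[k] x ∈ T.base).card

/-- `G x = ∑_{j=0}^{ω(x)-1} g (U^j (π₀ x))`. -/
noncomputable def towerSum (T : YoungTower μ U) (g : Δ → ℝ) (x : Δ) : ℝ :=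
  ∑ j ∈ Finset.range (T.height x), g (U^[j] (T.proj x))

/-- The transfer operator `Û u (x) = ∑_{U y = x} J y · u y`. -/
noncomputable def transfer (T : YoungTower μ U) (u : Δ → ℂ) (x : Δ) : ℂ :=
  ∑' y : {y : Δ // U y = x}, (T.J y.1 : ℂ) * u y.1

/-- The perturbed transfer operator `Û_t u = Û (e^{itg} u)`. -/
noncomputable def transferPert (T : YoungTower μ U) (g : Δ → ℝ) (t : ℝ) (u : Δ → ℂ) :
    Δ → ℂ :=
  T.transfer fun y => Complex.exp (Complex.I * t * g y) * u y

/-- The weighted sup norm `‖u‖_m`. -/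
noncomputable def normM (T : YoungTower μ U) (ε : ℝ) (u : Δ → ℂ) : ℝ≥0∞ :=
  sInf {C : ℝ≥0∞ | ∀ n : ℕ, ∀ᵐ x ∂μ, x ∈ T.level n →
    (‖u x‖₊ : ℝ≥0∞) ≤ C * ENNReal.ofReal (Real.exp (ε * n))}

/-- The weighted Hölder seminorm `‖u‖_l`. -/
noncomputable def normL (T : YoungTower μ U) (ε τ : ℝ) (u : Δ → ℂ) : ℝ≥0∞ :=
  sInf {C : ℝ≥0∞ | ∀ n : ℕ, ∀ᵐ x ∂μ, ∀ᵐ y ∂μ,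
    (x ∈ T.level n ∧ T.SameCell x y) →
    (‖u x - u y‖₊ : ℝ≥0∞) ≤ C * ENNReal.ofReal (Real.exp (ε * n) * τ ^ (T.s x y))}

/-- The norm `‖u‖ = ‖u‖_m + ‖u‖_l` of the Banach space `H`. -/
noncomputable def normH (T : YoungTower μ U) (ε τ : ℝ) (u : Δ → ℂ) : ℝ≥0∞ :=
  T.normM ε u + T.normL ε τ u

/-- Membership in the Banach space `H`. -/
def MemH (T : YoungTower μ U) (ε τ : ℝ) (u : Δ → ℂ) : Prop :=
  Measurable u ∧ T.normH ε τ u < ⊤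

end YoungTower

namespace YoungTower

variable {Δ : Type*} [MeasurableSpace Δ] {μ : Measure Δ} {U : Δ → Δ} (T : YoungTower μ U)

lemma base_meas : MeasurableSet T.base := MeasurableSet.iUnion fun m => T.cell_meas 0 m

lemma cell0_subset_base (p : ℕ) : T.cell 0 p ⊆ T.base := subset_iUnion (fun m => T.cell 0 m) p

lemma measurable_iterate (T : YoungTower μ U) (n : ℕ) : Measurable (U^[n]) :=
  Measurable.iterate T.measurable_U n

lemma iterate_mem_cell {p k : ℕ} {x : Δ} (hx : x ∈ T.cell k p) :
    ∀ i, k + i < T.r p → U^[i] x ∈ T.cell (k + i) p := by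
  intro i
  induction i with
  | zero => intro _; simpa using hx
  | succ i ih =>
    intro h
    have hi : k + i < T.r p := by omega
    have h1 : k + i + 1 < T.r p := by omega
    have h2 := (T.map_up p (k + i) h1).mapsTo (ih hi)
    rw [Function.iterate_succ_apply']
    have : k + (i + 1) = k + i + 1 := by omega
    rw [this]
    exact h2

lemma iterate_ret_mem_base {p k : ℕ} (hk : k < T.r p) {x : Δ} (hx : x ∈ T.cell k p) :
    U^[T.r p - k] x ∈ T.base := by
  have hr := T.r_pos p
  have htop : U^[T.r p - 1 - k] x ∈ T.cell (T.r p - 1) p := by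
    have h := T.iterate_mem_cell hx (T.r p - 1 - k) (by omega)
    have hkk : k + (T.r p - 1 - k) = T.r p - 1 := by omega
    rwa [hkk] at h
  have h2 := (T.map_top p).mapsTo htop
  have hstep : T.r p - k = (T.r p - 1 - k) + 1 := by omega
  rw [hstep, Function.iterate_succ_apply']
  exact h2

lemma not_mem_base {k p : ℕ} (hk : k ≠ 0) {x : Δ} (hx : x ∈ T.cell k p) : x ∉ T.base := by
  intro hb
  rcases mem_iUnion.1 hb with ⟨m, hm⟩
  exact (T.cell_disj k p 0 m (by simp [Prod.ext_iff, hk])).le_bot ⟨hx, hm⟩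

lemma iterate_not_mem_base {p k : ℕ} {x : Δ} (hx : x ∈ T.cell k p)
    {i : ℕ} (hi0 : 0 < i) (hir : k + i < T.r p) : U^[i] x ∉ T.base :=
  T.not_mem_base (k := k + i) (by omega) (T.iterate_mem_cell hx i hir)

lemma climb {p k : ℕ} (h : k + 1 < T.r p) {S : Set Δ} (hS : MeasurableSet S) :
    μ (T.cell (k + 1) p ∩ S) = μ (T.cell k p ∩ U ⁻¹' S) := by
  have himg : U '' (T.cell k p ∩ U ⁻¹' S) = T.cell (k + 1) p ∩ S := by
    rw [Set.image_inter_preimage, (T.map_up p k h).image_eq]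
  rw [← himg]
  exact T.map_up_measure p k h _ inter_subset_left
    ((T.cell_meas k p).inter (hS.preimage T.measurable_U))

lemma climb_many {p : ℕ} : ∀ d k, k + d + 1 = T.r p → ∀ S : Set Δ, MeasurableSet S →
    μ (T.cell k p ∩ U^[d + 1] ⁻¹' S) = μ (T.cell (T.r p - 1) p ∩ U ⁻¹' S) := by
  intro d
  induction d with
  | zero =>
    intro k hk S hS
    have hkk : k = T.r p - 1 := by omega
    subst hkk
    simp
  | succ d ih =>
    intro k hk S hS
    have hpre : (U^[d + 1 + 1]) ⁻¹' S = U ⁻¹' (U^[d + 1] ⁻¹' S) := by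
      have : U^[d + 1 + 1] = U^[d + 1] ∘ U := Function.iterate_succ U (d + 1)
      rw [this, Set.preimage_comp]
    rw [hpre, ← T.climb (by omega) ((hS.preimage (T.measurable_iterate (d + 1))))]
    exact ih (k + 1) (by omega) S hS

lemma measure_cell (p : ℕ) : ∀ k, k < T.r p → μ (T.cell k p) = μ (T.cell 0 p) := by
  intro k
  induction k with
  | zero => intro _; rfl
  | succ k ih =>
    intro hk
    have h1 : μ (T.cell (k + 1) p ∩ univ) = μ (T.cell k p ∩ U ⁻¹' univ) :=
      T.climb (by omega) MeasurableSet.univ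
    simp only [Set.inter_univ, Set.preimage_univ] at h1
    rw [h1]
    exact ih (by omega)

noncomputable def lamM (T : YoungTower μ U) (p : ℕ) : Measure Δ :=
  Measure.map U (μ.restrict (T.cell (T.r p - 1) p))

lemma lamM_apply (p : ℕ) {E : Set Δ} (hE : MeasurableSet E) :
    T.lamM p E = μ (T.cell (T.r p - 1) p ∩ U ⁻¹' E) := by
  rw [lamM, Measure.map_apply T.measurable_U hE,
    Measure.restrict_apply (hE.preimage T.measurable_U), Set.inter_comm]

lemma map_iterate_restrict {p k : ℕ} (hk : k < T.r p) :
    Measure.map (U^[T.r p - k]) (μ.restrict (T.cell k p)) = T.lamM p := by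
  ext E hE
  rw [Measure.map_apply (T.measurable_iterate _) hE,
    Measure.restrict_apply ((hE.preimage (T.measurable_iterate _))), Set.inter_comm,
    T.lamM_apply p hE]
  have hstep : T.r p - k = (T.r p - 1 - k) + 1 := by omega
  rw [hstep]
  exact T.climb_many (T.r p - 1 - k) k (by omega) E hE

lemma tops_eq_preimage_base : (⋃ p, T.cell (T.r p - 1) p) = U ⁻¹' T.base := by
  apply Subset.antisymm
  · intro x hx
    rcases mem_iUnion.1 hx with ⟨p, hp⟩
    exact (T.map_top p).mapsTo hp
  · intro x hx
    rcases T.cell_cover x with ⟨p, k, hk, hcell⟩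
    rcases Nat.lt_or_ge k (T.r p - 1) with h | h
    · exfalso
      have h1 : k + 1 < T.r p := by omega
      have h2 : U x ∈ T.cell (k + 1) p := (T.map_up p k h1).mapsTo hcell
      exact T.not_mem_base (by omega) h2 hx
    · have hkk : k = T.r p - 1 := by omega
      exact mem_iUnion.2 ⟨p, hkk ▸ hcell⟩

lemma tops_disjoint : Pairwise (Function.onFun Disjoint fun p => T.cell (T.r p - 1) p) := by
  intro p q hpq
  exact T.cell_disj _ p _ q (by simp [Prod.ext_iff, hpq])

lemma sum_lamM : Measure.sum (fun p => T.lamM p) = μ.restrict T.base := by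
  ext E hE
  rw [Measure.sum_apply _ hE, Measure.restrict_apply hE]
  have h1 : ∀ p, T.lamM p E = μ (T.cell (T.r p - 1) p ∩ U ⁻¹' E) := fun p => T.lamM_apply p hE
  simp_rw [h1]
  rw [← measure_iUnion (f := fun p => T.cell (T.r p - 1) p ∩ U ⁻¹' E)
    (fun p q hpq => Disjoint.mono inter_subset_left inter_subset_left (T.tops_disjoint hpq))
    (fun p => (T.cell_meas _ _).inter (hE.preimage T.measurable_U))]
  have hset : (⋃ p, T.cell (T.r p - 1) p ∩ U ⁻¹' E) = U ⁻¹' (E ∩ T.base) := by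
    rw [← Set.iUnion_inter, tops_eq_preimage_base, ← Set.preimage_inter, Set.inter_comm]
  rw [hset]
  exact T.measurePreserving_U.measure_preimage (hE.inter T.base_meas).nullMeasurableSet

lemma J_le {k p : ℕ} {x y : Δ} (hx : x ∈ T.cell k p) (hy : y ∈ T.cell k p) :
    T.J x ≤ (1 + T.Cd) * T.J y := by
  have h := T.distortion k p x hx y hy
  have hb : T.β ^ T.s (U x) (U y) ≤ 1 :=
    pow_le_one₀ T.β_pos.le T.β_lt_one.le
  have hCd := T.Cd_pos
  have h2 : |1 - T.J x / T.J y| ≤ T.Cd := h.trans (by nlinarith)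
  have hJy := T.J_pos y
  have h3 : T.J x / T.J y ≤ 1 + T.Cd := by
    have := (abs_le.1 h2).1
    linarith
  calc T.J x = T.J x / T.J y * T.J y := by field_simp
  _ ≤ (1 + T.Cd) * T.J y := by nlinarith [T.J_pos x]

lemma measure_base_inter (p : ℕ) {S : Set Δ} (hS : MeasurableSet S) :
    μ (T.base ∩ S) = ∫⁻ x in T.cell (T.r p - 1) p ∩ U ⁻¹' S, ENNReal.ofReal (T.J x)⁻¹ ∂μ := by
  have himg : U '' (T.cell (T.r p - 1) p ∩ U ⁻¹' S) = T.base ∩ S := by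
    rw [Set.image_inter_preimage, (T.map_top p).image_eq]
    rfl
  rw [← himg]
  exact T.J_spec _ p _ inter_subset_left
    ((T.cell_meas _ _).inter (hS.preimage T.measurable_U))

lemma lamM_mul_le (p : ℕ) {E : Set Δ} (hE : MeasurableSet E) :
    T.lamM p E * μ T.base ≤
      ENNReal.ofReal ((1 + T.Cd) ^ 2) * (μ (T.cell 0 p) * μ (E ∩ T.base)) := by
  rcases Set.eq_empty_or_nonempty (T.cell (T.r p - 1) p) with he | ⟨x₀, hx₀⟩
  · have h0 : T.lamM p E = 0 := by
      rw [T.lamM_apply p hE]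
      exact measure_mono_null inter_subset_left (by rw [he]; simp)
    simp [h0]
  · have hCd := T.Cd_pos
    have hJ0 := T.J_pos x₀
    set c : ℝ := (1 + T.Cd) * T.J x₀ with hc
    have hcpos : 0 < c := by positivity
    have hi : T.lamM p E ≤ ENNReal.ofReal c * μ (T.base ∩ E) := by
      have hlow : ∀ x ∈ T.cell (T.r p - 1) p ∩ U ⁻¹' E,
          ENNReal.ofReal c⁻¹ ≤ ENNReal.ofReal (T.J x)⁻¹ := by
        intro x hx
        apply ENNReal.ofReal_le_ofReal
        have hJle : T.J x ≤ c := T.J_le hx.1 hx₀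
        have := one_div_le_one_div_of_le (T.J_pos x) hJle
        simpa [one_div] using this
      have h1 : ENNReal.ofReal c⁻¹ * μ (T.cell (T.r p - 1) p ∩ U ⁻¹' E) ≤ μ (T.base ∩ E) := by
        rw [T.measure_base_inter p hE]
        calc ENNReal.ofReal c⁻¹ * μ (T.cell (T.r p - 1) p ∩ U ⁻¹' E)
            = ∫⁻ _ in T.cell (T.r p - 1) p ∩ U ⁻¹' E, ENNReal.ofReal c⁻¹ ∂μ := by
              rw [setLIntegral_const, mul_comm]
          _ ≤ ∫⁻ x in T.cell (T.r p - 1) p ∩ U ⁻¹' E, ENNReal.ofReal (T.J x)⁻¹ ∂μ :=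
              setLIntegral_mono (ENNReal.measurable_ofReal.comp T.J_meas.inv) hlow
      have hcc : ENNReal.ofReal c * ENNReal.ofReal c⁻¹ = 1 := by
        rw [← ENNReal.ofReal_mul hcpos.le, mul_inv_cancel₀ hcpos.ne']
        exact ENNReal.ofReal_one
      calc T.lamM p E = ENNReal.ofReal c * ENNReal.ofReal c⁻¹ * T.lamM p E := by
            rw [hcc, one_mul]
        _ = ENNReal.ofReal c * (ENNReal.ofReal c⁻¹ * μ (T.cell (T.r p - 1) p ∩ U ⁻¹' E)) := by
            rw [T.lamM_apply p hE, mul_assoc]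
        _ ≤ ENNReal.ofReal c * μ (T.base ∩ E) := mul_le_mul_right h1 _
    have hii : μ T.base ≤ ENNReal.ofReal ((1 + T.Cd) * (T.J x₀)⁻¹) * μ (T.cell 0 p) := by
      have hbase : μ (T.base ∩ univ) =
          ∫⁻ x in T.cell (T.r p - 1) p ∩ U ⁻¹' univ, ENNReal.ofReal (T.J x)⁻¹ ∂μ :=
        T.measure_base_inter p MeasurableSet.univ
      simp only [Set.inter_univ, Set.preimage_univ] at hbase
      rw [hbase]
      have hup : ∀ x ∈ T.cell (T.r p - 1) p,
          ENNReal.ofReal (T.J x)⁻¹ ≤ ENNReal.ofReal ((1 + T.Cd) * (T.J x₀)⁻¹) := by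
        intro x hx
        apply ENNReal.ofReal_le_ofReal
        have hJle : T.J x₀ ≤ (1 + T.Cd) * T.J x := T.J_le hx₀ hx
        have hJx := T.J_pos x
        have hgoal : 1 / T.J x ≤ (1 + T.Cd) / T.J x₀ := by
          rw [div_le_div_iff₀ hJx hJ0]
          linarith
        simpa [one_div, div_eq_mul_inv] using hgoal
      calc ∫⁻ x in T.cell (T.r p - 1) p, ENNReal.ofReal (T.J x)⁻¹ ∂μ
          ≤ ∫⁻ _ in T.cell (T.r p - 1) p, ENNReal.ofReal ((1 + T.Cd) * (T.J x₀)⁻¹) ∂μ :=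
            setLIntegral_mono measurable_const hup
        _ = ENNReal.ofReal ((1 + T.Cd) * (T.J x₀)⁻¹) * μ (T.cell (T.r p - 1) p) := by
            rw [setLIntegral_const]
        _ = ENNReal.ofReal ((1 + T.Cd) * (T.J x₀)⁻¹) * μ (T.cell 0 p) := by
            rw [T.measure_cell p (T.r p - 1) (by have := T.r_pos p; omega)]
    calc T.lamM p E * μ T.base
        ≤ (ENNReal.ofReal c * μ (T.base ∩ E)) *
            (ENNReal.ofReal ((1 + T.Cd) * (T.J x₀)⁻¹) * μ (T.cell 0 p)) :=
          mul_le_mul' hi hii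
      _ = (ENNReal.ofReal c * ENNReal.ofReal ((1 + T.Cd) * (T.J x₀)⁻¹)) *
            (μ (T.cell 0 p) * μ (E ∩ T.base)) := by
          rw [Set.inter_comm T.base E]; ring
      _ = ENNReal.ofReal ((1 + T.Cd) ^ 2) * (μ (T.cell 0 p) * μ (E ∩ T.base)) := by
          congr 1
          rw [← ENNReal.ofReal_mul hcpos.le]
          congr 1
          field_simp [hc]
          ring

lemma base_pos : 0 < μ T.base := by
  by_contra hcon
  push_neg at hcon
  have hzero : μ T.base = 0 := le_antisymm hcon bot_le
  have hcell0 : ∀ p, μ (T.cell 0 p) = 0 := fun p =>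
    measure_mono_null (T.cell0_subset_base p) hzero
  have hcell : ∀ n p, μ (T.cell n p) = 0 := by
    intro n p
    rcases Nat.lt_or_ge n (T.r p) with h | h
    · rw [T.measure_cell p n h]; exact hcell0 p
    · rw [T.cell_empty n p h]; simp
  have hlevel : ∀ n, μ (T.level n) = 0 := by
    intro n
    refine le_antisymm ?_ bot_le
    calc μ (T.level n) = μ (⋃ p, T.cell n p) := rfl
      _ ≤ ∑' p, μ (T.cell n p) := measure_iUnion_le (fun p => T.cell n p)
      _ = 0 := by simp [hcell]
  have hcover : (Set.univ : Set Δ) ⊆ ⋃ n, T.level n := by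
    intro x _
    rcases T.cell_cover x with ⟨p, k, hk, hc⟩
    exact mem_iUnion.2 ⟨k, mem_iUnion.2 ⟨p, hc⟩⟩
  have huniv : μ (Set.univ : Set Δ) = 0 := by
    refine le_antisymm ?_ bot_le
    calc μ Set.univ ≤ μ (⋃ n, T.level n) := measure_mono hcover
      _ ≤ ∑' n, μ (T.level n) := measure_iUnion_le (fun n => T.level n)
      _ = 0 := by simp [hlevel]
  haveI := T.isProb
  rw [measure_univ] at huniv
  exact one_ne_zero huniv

lemma base_lt_top : μ T.base < ⊤ := by
  haveI := T.isProb
  calc μ T.base ≤ μ Set.univ := measure_mono (Set.subset_univ _)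
    _ = 1 := measure_univ
    _ < ⊤ := ENNReal.one_lt_top

lemma base_le_one : μ T.base ≤ 1 := by
  haveI := T.isProb
  calc μ T.base ≤ μ Set.univ := measure_mono (Set.subset_univ _)
    _ = 1 := measure_univ

lemma tail_le {C0 ρ : ℝ} (htails : T.ExpTails C0 ρ) {j : ℕ} (hj : 1 ≤ j) :
    ∑' p : { p // T.r p = j }, μ (T.cell 0 p.1) ≤ ENNReal.ofReal (C0 * ρ ^ (j - 1)) := by
  have h1 : ∀ p : { p // T.r p = j }, μ (T.cell 0 p.1) = μ (T.cell (j - 1) p.1) := by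
    intro p
    exact (T.measure_cell p.1 (j - 1) (by have := p.2; omega)).symm
  calc ∑' p : { p // T.r p = j }, μ (T.cell 0 p.1)
      = ∑' p : { p // T.r p = j }, μ (T.cell (j - 1) p.1) := tsum_congr h1
    _ = μ (⋃ p : { p // T.r p = j }, T.cell (j - 1) p.1) := by
        rw [measure_iUnion ?_ fun p => T.cell_meas _ _]
        intro p q hpq
        apply T.cell_disj _ p.1 _ q.1
        simp only [ne_eq, Prod.mk.injEq, true_and]
        exact fun h => hpq (Subtype.ext h)
    _ ≤ μ (T.level (j - 1)) :=
        measure_mono (iUnion_subset fun p => subset_iUnion (fun q => T.cell (j - 1) q) p.1)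
    _ ≤ ENNReal.ofReal (C0 * ρ ^ (j - 1)) := htails _

lemma retCount_zero_eq (x : Δ) : T.retCount 0 x = 0 := by
  simp [retCount]

lemma measurable_retCount (n : ℕ) : Measurable fun x => T.retCount n x := by
  have heq : (fun x => T.retCount n x)
      = fun x => ∑ k ∈ Finset.Icc 1 n, if U^[k] x ∈ T.base then 1 else 0 := by
    funext x
    rw [retCount, Finset.card_filter]
  rw [heq]
  apply Finset.measurable_sum
  intro k _
  exact Measurable.ite (T.base_meas.preimage (T.measurable_iterate k))
    measurable_const measurable_const

lemma retCount_shift {p k : ℕ} (hk : k < T.r p) {x : Δ} (hx : x ∈ T.cell k p)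
    {n : ℕ} (hn : T.r p - k ≤ n) :
    T.retCount n x = 1 + T.retCount (n - (T.r p - k)) (U^[T.r p - k] x) := by
  set j := T.r p - k with hj
  have hj1 : 1 ≤ j := by omega
  have hkey : (Finset.Icc 1 n).filter (fun i => U^[i] x ∈ T.base)
      = insert j (((Finset.Icc 1 (n - j)).filter
          (fun i => U^[i] (U^[j] x) ∈ T.base)).image (· + j)) := by
    ext i
    simp only [Finset.mem_insert, Finset.mem_image, Finset.mem_filter, Finset.mem_Icc]
    constructor
    · rintro ⟨⟨h1, h2⟩, hP⟩
      rcases lt_trichotomy i j with h | h | h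
      · exact absurd hP (T.iterate_not_mem_base hx (by omega) (by omega))
      · exact Or.inl h
      · refine Or.inr ⟨i - j, ⟨⟨by omega, by omega⟩, ?_⟩, by omega⟩
        rw [← Function.iterate_add_apply]
        have hij : i - j + j = i := by omega
        rw [hij]
        exact hP
    · rintro (rfl | ⟨i', ⟨⟨h1, h2⟩, hP⟩, rfl⟩)
      · exact ⟨⟨hj1, hn⟩, T.iterate_ret_mem_base hk hx⟩
      · refine ⟨⟨by omega, by omega⟩, ?_⟩
        rw [Function.iterate_add_apply]
        exact hP
  have hnot : j ∉ ((Finset.Icc 1 (n - j)).filter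
      (fun i => U^[i] (U^[j] x) ∈ T.base)).image (· + j) := by
    intro hmem
    rcases Finset.mem_image.1 hmem with ⟨i', hi', hii⟩
    have h5 := (Finset.mem_filter.1 hi').1
    rw [Finset.mem_Icc] at h5
    omega
  rw [retCount, hkey, Finset.card_insert_of_notMem hnot,
    Finset.card_image_of_injective _ (add_left_injective j), retCount, add_comm]

noncomputable def uu (T : YoungTower μ U) (τ : ℝ) (n : ℕ) : Δ → ℝ≥0∞ := fun y =>
  ((U^[n]) ⁻¹' T.base).indicator (fun y => ENNReal.ofReal (τ ^ T.retCount n y)) y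

lemma measurable_uu (τ : ℝ) (n : ℕ) : Measurable (T.uu τ n) := by
  apply Measurable.indicator _ (T.base_meas.preimage (T.measurable_iterate n))
  exact ENNReal.measurable_ofReal.comp (measurable_from_top.comp (T.measurable_retCount n))

lemma uu_le_one {τ : ℝ} (h0 : 0 ≤ τ) (h1 : τ ≤ 1) (n : ℕ) (y : Δ) : T.uu τ n y ≤ 1 := by
  unfold uu
  by_cases hmem : y ∈ (U^[n]) ⁻¹' T.base
  · rw [Set.indicator_of_mem hmem]
    exact ENNReal.ofReal_le_one.2 (pow_le_one₀ h0 h1)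
  · rw [Set.indicator_of_notMem hmem]
    exact zero_le_one

lemma uu_zero_eq_one {y : Δ} (hy : y ∈ T.base) (τ : ℝ) : T.uu τ 0 y = 1 := by
  unfold uu
  rw [Set.indicator_of_mem (by simpa using hy)]
  simp [retCount]

lemma uu_eq_zero {p : ℕ} {y : Δ} (hy : y ∈ T.cell 0 p) {τ : ℝ} {m : ℕ}
    (h1 : 1 ≤ m) (h2 : m < T.r p) : T.uu τ m y = 0 := by
  unfold uu
  apply Set.indicator_of_notMem
  intro hmem
  exact T.iterate_not_mem_base (i := m) hy (by omega) (by omega) hmem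

lemma uu_rec {τ : ℝ} (hτ0 : 0 ≤ τ) {p : ℕ} {y : Δ} (hy : y ∈ T.cell 0 p) {m : ℕ}
    (hm : T.r p ≤ m) :
    T.uu τ m y = ENNReal.ofReal τ * T.uu τ (m - T.r p) (U^[T.r p] y) := by
  have hiter : U^[m] y = U^[m - T.r p] (U^[T.r p] y) := by
    rw [← Function.iterate_add_apply]
    congr 1
    omega
  have hcount : T.retCount m y = 1 + T.retCount (m - T.r p) (U^[T.r p] y) := by
    have h := T.retCount_shift (p := p) (k := 0) (T.r_pos p) hy
      (n := m) (by simpa using hm)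
    simpa using h
  by_cases hmem : y ∈ (U^[m]) ⁻¹' T.base
  · have hmem2 : U^[m] y ∈ T.base := hmem
    have hmem' : U^[m - T.r p] (U^[T.r p] y) ∈ T.base := by rwa [hiter] at hmem2
    unfold uu
    rw [Set.indicator_of_mem hmem, Set.indicator_of_mem (by simpa using hmem'), hcount,
      pow_add, pow_one, ENNReal.ofReal_mul hτ0]
  · have hmem2 : U^[m] y ∉ T.base := hmem
    have hmem' : U^[m - T.r p] (U^[T.r p] y) ∉ T.base := by rwa [hiter] at hmem2
    unfold uu
    rw [Set.indicator_of_notMem hmem, Set.indicator_of_notMem (by simpa using hmem'), mul_zero]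

noncomputable def HH (T : YoungTower μ U) (τ z : ℝ) (N : ℕ) : Δ → ℝ≥0∞ := fun y =>
  ∑ m ∈ Finset.range (N + 1), ENNReal.ofReal z ^ m * T.uu τ m y

lemma measurable_HH (τ z : ℝ) (N : ℕ) : Measurable (T.HH τ z N) := by
  apply Finset.measurable_sum
  intro m _
  exact (T.measurable_uu τ m).const_mul _

lemma HH_le {τ z : ℝ} (hτ0 : 0 ≤ τ) (hτ1 : τ ≤ 1) (hz : 1 ≤ z) (N : ℕ) (y : Δ) :
    T.HH τ z N y ≤ ((N : ℝ≥0∞) + 1) * ENNReal.ofReal z ^ N := by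
  have hZ1 : (1 : ℝ≥0∞) ≤ ENNReal.ofReal z := ENNReal.one_le_ofReal.2 hz
  calc T.HH τ z N y
      ≤ ∑ _m ∈ Finset.range (N + 1), ENNReal.ofReal z ^ N * 1 := by
        apply Finset.sum_le_sum
        intro m hm
        exact mul_le_mul' (pow_le_pow_right' hZ1 (by
          have := Finset.mem_range.1 hm; omega)) (T.uu_le_one hτ0 hτ1 m y)
    _ = ((N : ℝ≥0∞) + 1) * ENNReal.ofReal z ^ N := by
        rw [Finset.sum_const, Finset.card_range, mul_one, nsmul_eq_mul]
        push_cast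
        ring

lemma HH_rec {τ z : ℝ} (hτ0 : 0 ≤ τ) (hz : 1 ≤ z) {p : ℕ} {y : Δ} (hy : y ∈ T.cell 0 p)
    (N : ℕ) :
    T.HH τ z N y ≤ 1 + ENNReal.ofReal τ * ENNReal.ofReal z ^ T.r p *
      T.HH τ z N (U^[T.r p] y) := by
  have hr := T.r_pos p
  rcases le_or_gt (N + 1) (T.r p) with hcase | hcase
  · have hone : T.HH τ z N y = 1 := by
      unfold HH
      rw [Finset.sum_eq_single 0]
      · simp [T.uu_zero_eq_one (T.cell0_subset_base p hy)]
      · intro m hm hm0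
        have hmN := Finset.mem_range.1 hm
        rw [T.uu_eq_zero hy (by omega) (by omega), mul_zero]
      · intro h0
        exact absurd (Finset.mem_range.2 (by omega)) h0
    rw [hone]
    exact le_self_add
  · unfold HH
    rw [Finset.range_eq_Ico,
      ← Finset.sum_Ico_consecutive _ (Nat.zero_le (T.r p)) (by omega : T.r p ≤ N + 1)]
    have hfirst : ∑ m ∈ Finset.Ico 0 (T.r p), ENNReal.ofReal z ^ m * T.uu τ m y = 1 := by
      rw [← Finset.range_eq_Ico, Finset.sum_eq_single 0]
      · simp [T.uu_zero_eq_one (T.cell0_subset_base p hy)]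
      · intro m hm hm0
        have hmr := Finset.mem_range.1 hm
        rw [T.uu_eq_zero hy (by omega) (by omega), mul_zero]
      · intro h0
        exact absurd (Finset.mem_range.2 (by omega)) h0
    rw [hfirst, Finset.sum_Ico_eq_sum_range]
    apply add_le_add_right
    have hterm : ∀ i, ENNReal.ofReal z ^ (T.r p + i) * T.uu τ (T.r p + i) y
        = ENNReal.ofReal τ * ENNReal.ofReal z ^ T.r p *
          (ENNReal.ofReal z ^ i * T.uu τ i (U^[T.r p] y)) := by
      intro i
      rw [T.uu_rec hτ0 hy (by omega : T.r p ≤ T.r p + i), Nat.add_sub_cancel_left, pow_add]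
      ring
    calc ∑ i ∈ Finset.range (N + 1 - T.r p), ENNReal.ofReal z ^ (T.r p + i) * T.uu τ (T.r p + i) y
        = ∑ i ∈ Finset.range (N + 1 - T.r p), ENNReal.ofReal τ * ENNReal.ofReal z ^ T.r p *
            (ENNReal.ofReal z ^ i * T.uu τ i (U^[T.r p] y)) := by
          exact Finset.sum_congr rfl fun i _ => hterm i
      _ = ENNReal.ofReal τ * ENNReal.ofReal z ^ T.r p *
            ∑ i ∈ Finset.range (N + 1 - T.r p), ENNReal.ofReal z ^ i * T.uu τ i (U^[T.r p] y) := by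
          rw [← Finset.mul_sum]
      _ ≤ ENNReal.ofReal τ * ENNReal.ofReal z ^ T.r p *
            ∑ m ∈ Finset.Ico 0 (N + 1), ENNReal.ofReal z ^ m * T.uu τ m (U^[T.r p] y) := by
          apply mul_le_mul_right
          apply Finset.sum_le_sum_of_subset
          rw [Finset.range_eq_Ico]
          exact Finset.Ico_subset_Ico le_rfl (by omega)

lemma HH_base_bound {τ z b : ℝ} (hτ0 : 0 ≤ τ) (hτ1 : τ ≤ 1) (hz : 1 ≤ z) (hb0 : 0 ≤ b)
    (hmeas : Measure.sum (fun p => ENNReal.ofReal z ^ T.r p • T.lamM p)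
      ≤ ENNReal.ofReal b • μ.restrict T.base)
    (hτb : τ * b < 1) (N : ℕ) :
    ∫⁻ y in T.base, T.HH τ z N y ∂μ ≤ ENNReal.ofReal (1 / (1 - τ * b)) := by
  set h := ∫⁻ y in T.base, T.HH τ z N y ∂μ with hh
  have hfin : h ≠ ⊤ := by
    have hle : h ≤ ((N : ℝ≥0∞) + 1) * ENNReal.ofReal z ^ N * μ T.base := by
      rw [hh]
      calc ∫⁻ y in T.base, T.HH τ z N y ∂μ
          ≤ ∫⁻ _ in T.base, ((N : ℝ≥0∞) + 1) * ENNReal.ofReal z ^ N ∂μ :=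
            setLIntegral_mono measurable_const fun y _ => T.HH_le hτ0 hτ1 hz N y
        _ = ((N : ℝ≥0∞) + 1) * ENNReal.ofReal z ^ N * μ T.base := setLIntegral_const _ _
    refine ne_top_of_le_ne_top ?_ hle
    exact ENNReal.mul_ne_top
      (ENNReal.mul_ne_top (by simp) (ENNReal.pow_ne_top ENNReal.ofReal_ne_top))
      T.base_lt_top.ne
  have hdecomp : h = ∑' p, ∫⁻ y in T.cell 0 p, T.HH τ z N y ∂μ := by
    rw [hh]
    have hb : T.base = ⋃ p, T.cell 0 p := rfl
    rw [hb, lintegral_iUnion (fun p => T.cell_meas 0 p)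
      (fun p q hpq => T.cell_disj 0 p 0 q (by simp [Prod.ext_iff, hpq]))]
  have hstep : ∀ p, ∫⁻ y in T.cell 0 p, T.HH τ z N y ∂μ
      ≤ μ (T.cell 0 p) + ENNReal.ofReal τ *
        (ENNReal.ofReal z ^ T.r p * ∫⁻ y, T.HH τ z N y ∂T.lamM p) := by
    intro p
    have hmap : ∫⁻ y in T.cell 0 p, T.HH τ z N (U^[T.r p] y) ∂μ
        = ∫⁻ y, T.HH τ z N y ∂T.lamM p := by
      have h0 := T.map_iterate_restrict (p := p) (k := 0) (T.r_pos p)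
      rw [Nat.sub_zero] at h0
      rw [← h0, lintegral_map (T.measurable_HH τ z N) (T.measurable_iterate _)]
    calc ∫⁻ y in T.cell 0 p, T.HH τ z N y ∂μ
        ≤ ∫⁻ y in T.cell 0 p,
            (1 + ENNReal.ofReal τ * ENNReal.ofReal z ^ T.r p * T.HH τ z N (U^[T.r p] y)) ∂μ :=
          setLIntegral_mono (measurable_const.add (((T.measurable_HH τ z N).comp
            (T.measurable_iterate (T.r p))).const_mul _)) fun y hy => T.HH_rec hτ0 hz hy N
      _ = μ (T.cell 0 p) + ENNReal.ofReal τ * ENNReal.ofReal z ^ T.r p *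
            ∫⁻ y in T.cell 0 p, T.HH τ z N (U^[T.r p] y) ∂μ := by
          have hfmeas : Measurable fun a => T.HH τ z N (U^[T.r p] a) :=
            (T.measurable_HH τ z N).comp (T.measurable_iterate (T.r p))
          rw [lintegral_add_left measurable_const, setLIntegral_one,
            lintegral_const_mul _ hfmeas]
      _ = μ (T.cell 0 p) + ENNReal.ofReal τ *
            (ENNReal.ofReal z ^ T.r p * ∫⁻ y, T.HH τ z N y ∂T.lamM p) := by
          rw [hmap, mul_assoc]
  have hsum : h ≤ μ T.base + ENNReal.ofReal τ * (ENNReal.ofReal b * h) := by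
    calc h = ∑' p, ∫⁻ y in T.cell 0 p, T.HH τ z N y ∂μ := hdecomp
      _ ≤ ∑' p, (μ (T.cell 0 p) + ENNReal.ofReal τ *
            (ENNReal.ofReal z ^ T.r p * ∫⁻ y, T.HH τ z N y ∂T.lamM p)) :=
          ENNReal.tsum_le_tsum hstep
      _ = (∑' p, μ (T.cell 0 p)) + ENNReal.ofReal τ *
            ∑' p, ENNReal.ofReal z ^ T.r p * ∫⁻ y, T.HH τ z N y ∂T.lamM p := by
          rw [ENNReal.tsum_add, ENNReal.tsum_mul_left]
      _ ≤ μ T.base + ENNReal.ofReal τ * (ENNReal.ofReal b * h) := by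
          apply add_le_add
          · have := measure_iUnion (μ := μ)
              (fun p q hpq => T.cell_disj 0 p 0 q (by simp [Prod.ext_iff, hpq]))
              (fun p => T.cell_meas 0 p)
            exact le_of_eq (this ▸ rfl)
          · apply mul_le_mul_right
            have e1 : ∑' p, ENNReal.ofReal z ^ T.r p * ∫⁻ y, T.HH τ z N y ∂T.lamM p
                = ∫⁻ y, T.HH τ z N y
                    ∂(Measure.sum fun p => ENNReal.ofReal z ^ T.r p • T.lamM p) := by
              rw [lintegral_sum_measure]
              exact tsum_congr fun p => by rw [lintegral_smul_measure, smul_eq_mul]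
            rw [e1]
            calc ∫⁻ y, T.HH τ z N y ∂(Measure.sum fun p => ENNReal.ofReal z ^ T.r p • T.lamM p)
                ≤ ∫⁻ y, T.HH τ z N y ∂(ENNReal.ofReal b • μ.restrict T.base) :=
                  lintegral_mono' hmeas le_rfl
              _ = ENNReal.ofReal b * h := by rw [lintegral_smul_measure, smul_eq_mul, hh]
  have hsum2 : h ≤ 1 + ENNReal.ofReal (τ * b) * h := by
    calc h ≤ μ T.base + ENNReal.ofReal τ * (ENNReal.ofReal b * h) := hsum
      _ ≤ 1 + ENNReal.ofReal τ * (ENNReal.ofReal b * h) := add_le_add_left T.base_le_one _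
      _ = 1 + ENNReal.ofReal (τ * b) * h := by rw [← mul_assoc, ← ENNReal.ofReal_mul hτ0]
  have hmulfin : ENNReal.ofReal (τ * b) * h ≠ ⊤ := ENNReal.mul_ne_top ENNReal.ofReal_ne_top hfin
  have hRHSfin : (1 : ℝ≥0∞) + ENNReal.ofReal (τ * b) * h ≠ ⊤ :=
    ENNReal.add_ne_top.2 ⟨by simp, hmulfin⟩
  have htr := ENNReal.toReal_mono hRHSfin hsum2
  rw [ENNReal.toReal_add (by simp) hmulfin, ENNReal.toReal_mul,
    ENNReal.toReal_ofReal (mul_nonneg hτ0 hb0), ENNReal.toReal_one] at htr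
  have hsolve : h.toReal ≤ 1 / (1 - τ * b) := by
    have h1 : h.toReal * (1 - τ * b) ≤ 1 := by nlinarith [ENNReal.toReal_nonneg (a := h)]
    rw [le_div_iff₀ (by linarith : (0:ℝ) < 1 - τ * b)]
    linarith
  calc h = ENNReal.ofReal h.toReal := (ENNReal.ofReal_toReal hfin).symm
    _ ≤ ENNReal.ofReal (1 / (1 - τ * b)) := ENNReal.ofReal_le_ofReal hsolve

lemma B_bound {τ z b : ℝ} (hτ0 : 0 ≤ τ) (hτ1 : τ ≤ 1) (hz : 1 ≤ z) (hb0 : 0 ≤ b)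
    (hmeas : Measure.sum (fun p => ENNReal.ofReal z ^ T.r p • T.lamM p)
      ≤ ENNReal.ofReal b • μ.restrict T.base)
    (hτb : τ * b < 1) (m : ℕ) :
    ∫⁻ y in T.base, T.uu τ m y ∂μ
      ≤ ENNReal.ofReal (1 / (1 - τ * b)) * ((ENNReal.ofReal z)⁻¹) ^ m := by
  have hZ0 : (ENNReal.ofReal z) ≠ 0 := by
    simp only [ne_eq, ENNReal.ofReal_eq_zero, not_le]
    linarith
  have hZtop : (ENNReal.ofReal z) ≠ ⊤ := ENNReal.ofReal_ne_top
  have key : ENNReal.ofReal z ^ m * ∫⁻ y in T.base, T.uu τ m y ∂μ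
      ≤ ENNReal.ofReal (1 / (1 - τ * b)) := by
    calc ENNReal.ofReal z ^ m * ∫⁻ y in T.base, T.uu τ m y ∂μ
        = ∫⁻ y in T.base, ENNReal.ofReal z ^ m * T.uu τ m y ∂μ :=
          (lintegral_const_mul _ (T.measurable_uu τ m)).symm
      _ ≤ ∫⁻ y in T.base, T.HH τ z m y ∂μ := by
          apply lintegral_mono
          intro y
          exact Finset.single_le_sum (f := fun mm => ENNReal.ofReal z ^ mm * T.uu τ mm y)
            (fun i _ => zero_le) (Finset.self_mem_range_succ m)
      _ ≤ ENNReal.ofReal (1 / (1 - τ * b)) := T.HH_base_bound hτ0 hτ1 hz hb0 hmeas hτb m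
  calc ∫⁻ y in T.base, T.uu τ m y ∂μ
      = ((ENNReal.ofReal z)⁻¹) ^ m * (ENNReal.ofReal z ^ m * ∫⁻ y in T.base, T.uu τ m y ∂μ) := by
        rw [← mul_assoc, ← mul_pow, ENNReal.inv_mul_cancel hZ0 hZtop, one_pow, one_mul]
    _ ≤ ((ENNReal.ofReal z)⁻¹) ^ m * ENNReal.ofReal (1 / (1 - τ * b)) := mul_le_mul_right key _
    _ = ENNReal.ofReal (1 / (1 - τ * b)) * ((ENNReal.ofReal z)⁻¹) ^ m := mul_comm _ _

lemma lamM_le_smul (p : ℕ) :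
    T.lamM p ≤ (ENNReal.ofReal ((1 + T.Cd) ^ 2) * μ (T.cell 0 p) / μ T.base) •
      μ.restrict T.base := by
  refine Measure.le_iff.2 fun E hE => ?_
  rw [Measure.smul_apply, smul_eq_mul, Measure.restrict_apply hE]
  have h1 := T.lamM_mul_le p hE
  have h2 : T.lamM p E
      ≤ ENNReal.ofReal ((1 + T.Cd) ^ 2) * (μ (T.cell 0 p) * μ (E ∩ T.base)) / μ T.base :=
    (ENNReal.le_div_iff_mul_le (Or.inl T.base_pos.ne') (Or.inl T.base_lt_top.ne)).2 h1
  refine h2.trans (le_of_eq ?_)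
  rw [div_eq_mul_inv, div_eq_mul_inv]
  ring

lemma tsum_fiber_le {C0 ρ : ℝ} (htails : T.ExpTails C0 ρ) {g : ℕ → ℝ≥0∞} (hg0 : g 0 = 0)
    {a : ℕ → ℝ} (ha0 : ∀ j, 0 ≤ a j) (hs : Summable a)
    (ha : ∀ j, 1 ≤ j → g j * ENNReal.ofReal (C0 * ρ ^ (j - 1)) ≤ ENNReal.ofReal (a j)) :
    ∑' p, g (T.r p) * μ (T.cell 0 p) ≤ ENNReal.ofReal (∑' j, a j) := by
  have h1 : ∑' p, g (T.r p) * μ (T.cell 0 p)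
      = ∑' σ : Σ j : ℕ, { p // T.r p = j }, g (T.r σ.2.1) * μ (T.cell 0 σ.2.1) :=
    ((Equiv.sigmaFiberEquiv T.r).tsum_eq (f := fun p => g (T.r p) * μ (T.cell 0 p))).symm
  rw [h1, ENNReal.tsum_sigma']
  have h2 : ∀ j : ℕ, (∑' p : { p // T.r p = j }, g (T.r p.1) * μ (T.cell 0 p.1))
      ≤ ENNReal.ofReal (a j) := by
    intro j
    have hcongr : ∀ p : { p // T.r p = j }, g (T.r p.1) * μ (T.cell 0 p.1)
        = g j * μ (T.cell 0 p.1) := fun p => by rw [p.2]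
    rw [tsum_congr hcongr, ENNReal.tsum_mul_left]
    rcases Nat.eq_zero_or_pos j with rfl | hj
    · rw [hg0, zero_mul]
      exact zero_le
    · calc g j * ∑' p : { p // T.r p = j }, μ (T.cell 0 p.1)
          ≤ g j * ENNReal.ofReal (C0 * ρ ^ (j - 1)) :=
            mul_le_mul_right (T.tail_le htails hj) _
        _ ≤ ENNReal.ofReal (a j) := ha j hj
  calc (∑' j, ∑' p : { p // T.r p = j }, g (T.r p.1) * μ (T.cell 0 p.1))
      ≤ ∑' j, ENNReal.ofReal (a j) := ENNReal.tsum_le_tsum h2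
    _ = ENNReal.ofReal (∑' j, a j) := (ENNReal.ofReal_tsum_of_nonneg ha0 hs).symm

lemma sum_bound {C0 ρ δ : ℝ} (hC0 : 0 < C0) (hρ0 : 0 < ρ) (htails : T.ExpTails C0 ρ)
    (hδ0 : 0 < δ) (hδρ : (1 + δ) * ρ < 1) :
    Measure.sum (fun p => ENNReal.ofReal (1 + δ) ^ T.r p • T.lamM p)
      ≤ ENNReal.ofReal (1 + (1 + T.Cd) ^ 2 *
          (δ * (C0 / ρ) * ∑' j : ℕ, (j : ℝ) * ((1 + δ) * ρ) ^ j) / (μ T.base).toReal) •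
        μ.restrict T.base := by
  have hCd := T.Cd_pos
  have h1δ : (0:ℝ) ≤ 1 + δ := by linarith
  have hw0 : (0:ℝ) ≤ (1 + δ) * ρ := by positivity
  have hm0pos : 0 < (μ T.base).toReal := ENNReal.toReal_pos T.base_pos.ne' T.base_lt_top.ne
  set Sd : ℝ := ∑' j : ℕ, (j : ℝ) * ((1 + δ) * ρ) ^ j with hSddef
  have hSdsum : Summable fun j : ℕ => (j : ℝ) * ((1 + δ) * ρ) ^ j := by
    have h := summable_pow_mul_geometric_of_norm_lt_one 1
      (r := (1 + δ) * ρ) (by rw [Real.norm_eq_abs, abs_of_nonneg hw0]; exact hδρ)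
    simpa using h
  have hSd0 : 0 ≤ Sd := tsum_nonneg fun j => by positivity
  set cδ : ℝ := (1 + T.Cd) ^ 2 * (δ * (C0 / ρ) * Sd) / (μ T.base).toReal with hcδdef
  have hcδ0 : 0 ≤ cδ := by positivity
  refine Measure.le_iff.2 fun E hE => ?_
  rw [Measure.smul_apply, smul_eq_mul, Measure.restrict_apply hE, Measure.sum_apply _ hE]
  simp only [Measure.smul_apply, smul_eq_mul]
  have hZ1 : (1 : ℝ≥0∞) ≤ ENNReal.ofReal (1 + δ) := ENNReal.one_le_ofReal.2 (by linarith)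
  have hZr1 : ∀ p : ℕ, (1 : ℝ≥0∞) ≤ ENNReal.ofReal (1 + δ) ^ T.r p := by
    intro p
    calc (1 : ℝ≥0∞) = 1 ^ T.r p := (one_pow _).symm
      _ ≤ ENNReal.ofReal (1 + δ) ^ T.r p := pow_le_pow_left' hZ1 _
  have hsplit : ∀ p, ENNReal.ofReal (1 + δ) ^ T.r p * T.lamM p E
      = T.lamM p E + (ENNReal.ofReal (1 + δ) ^ T.r p - 1) * T.lamM p E := by
    intro p
    conv_lhs => rw [← tsub_add_cancel_of_le (hZr1 p)]
    rw [add_mul, one_mul, add_comm]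
  calc ∑' p, ENNReal.ofReal (1 + δ) ^ T.r p * T.lamM p E
      = ∑' p, (T.lamM p E + (ENNReal.ofReal (1 + δ) ^ T.r p - 1) * T.lamM p E) :=
        tsum_congr hsplit
    _ = (∑' p, T.lamM p E) + ∑' p, (ENNReal.ofReal (1 + δ) ^ T.r p - 1) * T.lamM p E :=
        ENNReal.tsum_add
    _ ≤ μ (E ∩ T.base) + ENNReal.ofReal cδ * μ (E ∩ T.base) := by
        apply add_le_add
        · refine le_of_eq ?_
          calc ∑' p, T.lamM p E = (Measure.sum fun p => T.lamM p) E :=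
                (Measure.sum_apply _ hE).symm
            _ = μ.restrict T.base E := by rw [T.sum_lamM]
            _ = μ (E ∩ T.base) := Measure.restrict_apply hE
        · calc ∑' p, (ENNReal.ofReal (1 + δ) ^ T.r p - 1) * T.lamM p E
              ≤ ∑' p, (ENNReal.ofReal (1 + δ) ^ T.r p - 1) *
                  ((ENNReal.ofReal ((1 + T.Cd) ^ 2) * μ (T.cell 0 p) / μ T.base) *
                    μ (E ∩ T.base)) := by
                apply ENNReal.tsum_le_tsum
                intro p
                apply mul_le_mul_right
                have h4 := Measure.le_iff.1 (T.lamM_le_smul p) E hE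
                rwa [Measure.smul_apply, smul_eq_mul, Measure.restrict_apply hE] at h4
            _ = (∑' p, (ENNReal.ofReal (1 + δ) ^ T.r p - 1) * μ (T.cell 0 p)) *
                  (ENNReal.ofReal ((1 + T.Cd) ^ 2) * μ (E ∩ T.base) / μ T.base) := by
                rw [← ENNReal.tsum_mul_right]
                apply tsum_congr
                intro p
                rw [div_eq_mul_inv, div_eq_mul_inv]
                ring
            _ ≤ ENNReal.ofReal ((δ * (C0 / ρ)) * Sd) *
                  (ENNReal.ofReal ((1 + T.Cd) ^ 2) * μ (E ∩ T.base) / μ T.base) := by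
                apply mul_le_mul_left
                have hfib := T.tsum_fiber_le htails
                  (g := fun j => ENNReal.ofReal (1 + δ) ^ j - 1)
                  (hg0 := by simp)
                  (a := fun j => (δ * (C0 / ρ)) * ((j:ℝ) * ((1 + δ) * ρ) ^ j))
                  (ha0 := fun j => by positivity)
                  (hs := hSdsum.mul_left _)
                  (ha := ?_)
                · have hfib' : ∑' p, (ENNReal.ofReal (1 + δ) ^ T.r p - 1) * μ (T.cell 0 p)
                      ≤ ENNReal.ofReal
                          (∑' j : ℕ, (δ * (C0 / ρ)) * ((j:ℝ) * ((1 + δ) * ρ) ^ j)) := hfib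
                  calc ∑' p, (ENNReal.ofReal (1 + δ) ^ T.r p - 1) * μ (T.cell 0 p)
                      ≤ ENNReal.ofReal
                          (∑' j : ℕ, (δ * (C0 / ρ)) * ((j:ℝ) * ((1 + δ) * ρ) ^ j)) := hfib'
                    _ = ENNReal.ofReal ((δ * (C0 / ρ)) * Sd) := by
                        rw [hSddef, tsum_mul_left]
                · intro j hj
                  have hsub : ENNReal.ofReal (1 + δ) ^ j - 1
                      = ENNReal.ofReal ((1 + δ) ^ j - 1) := by
                    rw [ENNReal.ofReal_sub _ zero_le_one, ENNReal.ofReal_one,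
                      ← ENNReal.ofReal_pow h1δ]
                  rw [hsub, ← ENNReal.ofReal_mul' (by positivity)]
                  apply ENNReal.ofReal_le_ofReal
                  have hgeom : (1 + δ) ^ j - 1 ≤ δ * j * (1 + δ) ^ j := by
                    have hg := geom_sum_mul (1 + δ) j
                    have hsumle : (∑ i ∈ Finset.range j, (1 + δ) ^ i) ≤ j * (1 + δ) ^ j := by
                      calc (∑ i ∈ Finset.range j, (1 + δ) ^ i)
                          ≤ ∑ _i ∈ Finset.range j, (1 + δ) ^ j :=
                            Finset.sum_le_sum fun i hi => pow_le_pow_right₀ (by linarith)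
                              (le_of_lt (Finset.mem_range.1 hi))
                        _ = j * (1 + δ) ^ j := by
                            rw [Finset.sum_const, Finset.card_range, nsmul_eq_mul]
                    calc (1 + δ) ^ j - 1
                        = (∑ i ∈ Finset.range j, (1 + δ) ^ i) * δ := by
                          rw [← hg]; ring_nf
                      _ ≤ (j * (1 + δ) ^ j) * δ := mul_le_mul_of_nonneg_right hsumle hδ0.le
                      _ = δ * j * (1 + δ) ^ j := by ring
                  have hpw : ρ ^ (j - 1) * ρ = ρ ^ j := by
                    rw [← pow_succ]
                    congr 1
                    omega
                  have hρpow : C0 * ρ ^ (j - 1) = (C0 / ρ) * ρ ^ j := by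
                    rw [div_mul_eq_mul_div, eq_div_iff hρ0.ne']
                    calc C0 * ρ ^ (j - 1) * ρ = C0 * (ρ ^ (j - 1) * ρ) := by ring
                      _ = C0 * ρ ^ j := by rw [hpw]
                  calc ((1 + δ) ^ j - 1) * (C0 * ρ ^ (j - 1))
                      ≤ (δ * j * (1 + δ) ^ j) * (C0 * ρ ^ (j - 1)) :=
                        mul_le_mul_of_nonneg_right hgeom (by positivity)
                    _ = (δ * (C0 / ρ)) * ((j:ℝ) * ((1 + δ) * ρ) ^ j) := by
                        rw [hρpow, mul_pow]
                        ring
            _ = ENNReal.ofReal cδ * μ (E ∩ T.base) := by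
                have hμb : (μ T.base)⁻¹ = ENNReal.ofReal (((μ T.base).toReal)⁻¹) := by
                  rw [ENNReal.ofReal_inv_of_pos hm0pos, ENNReal.ofReal_toReal T.base_lt_top.ne]
                calc ENNReal.ofReal ((δ * (C0 / ρ)) * Sd) *
                      (ENNReal.ofReal ((1 + T.Cd) ^ 2) * μ (E ∩ T.base) / μ T.base)
                    = (ENNReal.ofReal ((δ * (C0 / ρ)) * Sd) * ENNReal.ofReal ((1 + T.Cd) ^ 2) *
                        (μ T.base)⁻¹) * μ (E ∩ T.base) := by
                      simp only [div_eq_mul_inv]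
                      ring
                  _ = ENNReal.ofReal ((1 + T.Cd) ^ 2 * (δ * (C0 / ρ) * Sd) *
                        ((μ T.base).toReal)⁻¹) * μ (E ∩ T.base) := by
                      congr 1
                      rw [hμb, ← ENNReal.ofReal_mul (by positivity),
                        ← ENNReal.ofReal_mul (by positivity)]
                      congr 1
                      ring
                  _ = ENNReal.ofReal cδ * μ (E ∩ T.base) := by
                      rw [hcδdef]
                      simp only [div_eq_mul_inv]
    _ = ENNReal.ofReal (1 + cδ) * μ (E ∩ T.base) := by
        rw [ENNReal.ofReal_add zero_le_one hcδ0, ENNReal.ofReal_one, add_mul, one_mul]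

lemma lintegral_cell_partition {S : Set Δ} (hS : MeasurableSet S) (f : Δ → ℝ≥0∞) :
    ∫⁻ x in S, f x ∂μ = ∑' kp : ℕ × ℕ, ∫⁻ x in S ∩ T.cell kp.1 kp.2, f x ∂μ := by
  have hcover : S = ⋃ kp : ℕ × ℕ, S ∩ T.cell kp.1 kp.2 := by
    ext x
    constructor
    · intro hx
      rcases T.cell_cover x with ⟨p, k, hk, hc⟩
      exact mem_iUnion.2 ⟨(k, p), hx, hc⟩
    · intro hx
      rcases mem_iUnion.1 hx with ⟨kp, hx1⟩
      exact hx1.1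
  have hdisj : Pairwise (Function.onFun Disjoint fun kp : ℕ × ℕ => S ∩ T.cell kp.1 kp.2) := by
    intro kp kq hne
    refine Disjoint.mono inter_subset_right inter_subset_right
      (T.cell_disj kp.1 kp.2 kq.1 kq.2 ?_)
    simpa using hne
  have hmain := lintegral_iUnion (μ := μ) (s := fun kp : ℕ × ℕ => S ∩ T.cell kp.1 kp.2)
    (fun kp => hS.inter (T.cell_meas kp.1 kp.2)) hdisj f
  rw [← hcover] at hmain
  exact hmain

lemma uu_eq_zero_of_not_mem {τ : ℝ} {m : ℕ} {y : Δ} (hy : ¬ y ∈ (U^[m]) ⁻¹' T.base) :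
    T.uu τ m y = 0 := by
  unfold uu
  exact Set.indicator_of_notMem hy _

lemma uu_eq_of_mem {τ : ℝ} {m : ℕ} {y : Δ} (hy : y ∈ (U^[m]) ⁻¹' T.base) :
    T.uu τ m y = ENNReal.ofReal (τ ^ T.retCount m y) := by
  unfold uu
  exact Set.indicator_of_mem hy _


end YoungTower
/-- Lemma `renouvell_exp`: on an expanding Young tower with `μ(Δ_n) ≤ C ρⁿ`, for `τ < 1`
and `ε > 0` with `e^ε ρ < 1`, the integral `∫_{U^{-n} Δ₀} τ^{Ψ_n} e^{ε ω} dμ` is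
exponentially small in `n`. -/
theorem renewal_exponential_estimate
    {Δ : Type*} [MeasurableSpace Δ] {μ : Measure Δ} {U : Δ → Δ}
    (T : YoungTower μ U)
    (C0 ρ : ℝ) (hC0 : 0 < C0) (hρ0 : 0 < ρ) (hρ1 : ρ < 1) (htails : T.ExpTails C0 ρ)
    (τ : ℝ) (hτ0 : 0 < τ) (hτ1 : τ < 1)
    (ε : ℝ) (hε : 0 < ε) (hερ : Real.exp ε * ρ < 1) :
    ∃ C' : ℝ, 0 < C' ∧ ∃ θ : ℝ, 0 < θ ∧ θ < 1 ∧ ∀ n : ℕ,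
      ∫⁻ x in (U^[n]) ⁻¹' T.base,
          ENNReal.ofReal (τ ^ (T.retCount n x) * Real.exp (ε * T.height x)) ∂μ ≤
        ENNReal.ofReal (C' * θ ^ n) := by
  classical
  have hCd := T.Cd_pos
  obtain ⟨W, Z, M, θ, hθ0, hθ1, hZ0, hZtop, hZW, hZe, hWθ, hMtop, hBbound⟩ :
      ∃ W Z M : ℝ≥0∞, ∃ θ : ℝ, 0 < θ ∧ θ < 1 ∧ Z ≠ 0 ∧ Z ≠ ⊤ ∧ W * Z = 1 ∧
        Z ≤ ENNReal.ofReal (Real.exp ε) ∧ W = ENNReal.ofReal θ ∧ M ≠ ⊤ ∧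
        ∀ m : ℕ, ∫⁻ y in T.base, T.uu τ m y ∂μ ≤ M * W ^ m := by
    have hm0pos : 0 < (μ T.base).toReal := ENNReal.toReal_pos T.base_pos.ne' T.base_lt_top.ne
    set m0 : ℝ := (μ T.base).toReal with hm0def
    set ρ1 : ℝ := (1 + ρ) / 2 with hρ1def
    have hρρ1 : ρ < ρ1 := by rw [hρ1def]; linarith
    have hρ11 : ρ1 < 1 := by rw [hρ1def]; linarith
    have hρ1pos : 0 < ρ1 := by rw [hρ1def]; linarith
    have hS1sum : Summable fun j : ℕ => (j : ℝ) * ρ1 ^ j := by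
      have h := summable_pow_mul_geometric_of_norm_lt_one 1
        (r := ρ1) (by rw [Real.norm_eq_abs, abs_of_pos hρ1pos]; exact hρ11)
      simpa using h
    set S1 : ℝ := ∑' j : ℕ, (j : ℝ) * ρ1 ^ j with hS1def
    have hS10 : 0 ≤ S1 := tsum_nonneg fun j => by positivity
    set Km : ℝ := (1 + T.Cd) ^ 2 * ((C0 / ρ) * S1) / m0 + 1 with hKmdef
    have hKmpos : 0 < Km := by
      rw [hKmdef]
      have h0 : 0 ≤ (1 + T.Cd) ^ 2 * ((C0 / ρ) * S1) / m0 := by positivity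
      linarith
    set δ : ℝ := min (min (ρ1 / ρ - 1) (Real.exp ε - 1)) ((1 - τ) / (2 * τ * Km)) with hδdef
    have hδ1 : δ ≤ ρ1 / ρ - 1 := le_trans (min_le_left _ _) (min_le_left _ _)
    have hδ2 : δ ≤ Real.exp ε - 1 := le_trans (min_le_left _ _) (min_le_right _ _)
    have hδ3 : δ ≤ (1 - τ) / (2 * τ * Km) := min_le_right _ _
    have hδ0 : 0 < δ := by
      refine lt_min (lt_min ?_ ?_) ?_
      · have h9 : 1 < ρ1 / ρ := (one_lt_div hρ0).2 hρρ1
        linarith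
      · nlinarith [Real.add_one_le_exp ε]
      · exact div_pos (by linarith) (by positivity)
    have hδρ1 : (1 + δ) * ρ ≤ ρ1 := by
      have h2 : (1 + δ) ≤ ρ1 / ρ := by linarith
      calc (1 + δ) * ρ ≤ ρ1 / ρ * ρ := mul_le_mul_of_nonneg_right h2 hρ0.le
        _ = ρ1 := by field_simp
    have hδρ : (1 + δ) * ρ < 1 := lt_of_le_of_lt hδρ1 hρ11
    have hδexp : 1 + δ ≤ Real.exp ε := by linarith
    have h1δ : (1:ℝ) ≤ 1 + δ := by linarith
    have hw0 : (0:ℝ) ≤ (1 + δ) * ρ := by positivity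
    have hSdsum : Summable fun j : ℕ => (j : ℝ) * ((1 + δ) * ρ) ^ j := by
      have h := summable_pow_mul_geometric_of_norm_lt_one 1
        (r := (1 + δ) * ρ) (by rw [Real.norm_eq_abs, abs_of_nonneg hw0]; exact hδρ)
      simpa using h
    set Sd : ℝ := ∑' j : ℕ, (j : ℝ) * ((1 + δ) * ρ) ^ j with hSddef
    have hSd0 : 0 ≤ Sd := tsum_nonneg fun j => by positivity
    have hSdS1 : Sd ≤ S1 := by
      rw [hSddef, hS1def]
      refine Summable.tsum_le_tsum (fun j => ?_) hSdsum hS1sum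
      exact mul_le_mul_of_nonneg_left (pow_le_pow_left₀ hw0 hδρ1 j) (Nat.cast_nonneg j)
    set cδ : ℝ := (1 + T.Cd) ^ 2 * (δ * (C0 / ρ) * Sd) / m0 with hcδdef
    have hcδ0 : 0 ≤ cδ := by positivity
    set b : ℝ := 1 + cδ with hbdef
    have hb0 : (0:ℝ) ≤ b := by rw [hbdef]; linarith
    have hcδle : cδ ≤ δ * Km := by
      rw [hcδdef]
      have key : (1 + T.Cd) ^ 2 * (δ * (C0 / ρ) * Sd) / m0
          = δ * ((1 + T.Cd) ^ 2 * ((C0 / ρ) * Sd) / m0) := by ring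
      rw [key]
      refine mul_le_mul_of_nonneg_left ?_ hδ0.le
      have h5 : (1 + T.Cd) ^ 2 * ((C0 / ρ) * Sd) / m0
          ≤ (1 + T.Cd) ^ 2 * ((C0 / ρ) * S1) / m0 := by
        gcongr
      rw [hKmdef]
      linarith
    have hτb : τ * b < 1 := by
      have h7 : δ * (2 * τ * Km) ≤ 1 - τ := by
        rw [← le_div_iff₀ (by positivity : (0:ℝ) < 2 * τ * Km)]
        exact hδ3
      have h8 : τ * cδ ≤ τ * (δ * Km) := mul_le_mul_of_nonneg_left hcδle hτ0.le
      rw [hbdef]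
      nlinarith
    have hmeas := T.sum_bound hC0 hρ0 htails hδ0 hδρ
    refine ⟨(ENNReal.ofReal (1 + δ))⁻¹, ENNReal.ofReal (1 + δ),
      ENNReal.ofReal (1 / (1 - τ * b)), (1 + δ)⁻¹, by positivity, ?_, ?_,
      ENNReal.ofReal_ne_top, ?_, ?_, ?_, ENNReal.ofReal_ne_top, ?_⟩
    · rw [inv_lt_one_iff₀]
      right
      linarith
    · simp only [ne_eq, ENNReal.ofReal_eq_zero, not_le]
      linarith
    · exact ENNReal.inv_mul_cancel (by
        simp only [ne_eq, ENNReal.ofReal_eq_zero, not_le]; linarith) ENNReal.ofReal_ne_top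
    · exact ENNReal.ofReal_le_ofReal hδexp
    · rw [← ENNReal.ofReal_inv_of_pos (by linarith : (0:ℝ) < 1 + δ)]
    · intro m
      exact T.B_bound hτ0.le hτ1.le h1δ hb0 hmeas hτb m
  -- tail constant
  have heρ0 : (0:ℝ) ≤ Real.exp ε * ρ := by positivity
  have hCtsum : Summable fun j : ℕ => (C0 / ρ) * ((j : ℝ) * (Real.exp ε * ρ) ^ j) := by
    apply Summable.mul_left
    have h := summable_pow_mul_geometric_of_norm_lt_one 1
      (r := Real.exp ε * ρ) (by rw [Real.norm_eq_abs, abs_of_nonneg heρ0]; exact hερ)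
    simpa using h
  set Ct : ℝ := ∑' j : ℕ, (C0 / ρ) * ((j : ℝ) * (Real.exp ε * ρ) ^ j) with hCtdef
  have hfiber2 : ∑' p, ((T.r p : ℝ≥0∞) * ENNReal.ofReal (Real.exp (ε * T.r p))) *
      μ (T.cell 0 p) ≤ ENNReal.ofReal Ct := by
    rw [hCtdef]
    refine T.tsum_fiber_le htails
      (g := fun j => (j : ℝ≥0∞) * ENNReal.ofReal (Real.exp (ε * j)))
      (hg0 := by simp) (ha0 := fun j => by positivity) (hs := hCtsum) ?_
    intro j hj
    have hpw : ρ ^ (j - 1) * ρ = ρ ^ j := by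
      rw [← pow_succ]
      congr 1
      omega
    have hρpow : C0 * ρ ^ (j - 1) = C0 / ρ * ρ ^ j := by
      rw [div_mul_eq_mul_div, eq_div_iff hρ0.ne']
      calc C0 * ρ ^ (j - 1) * ρ = C0 * (ρ ^ (j - 1) * ρ) := by ring
        _ = C0 * ρ ^ j := by rw [hpw]
    have hcast : (j : ℝ≥0∞) = ENNReal.ofReal (j : ℝ) := by
      rw [ENNReal.ofReal_natCast]
    rw [hcast, ← ENNReal.ofReal_mul (Nat.cast_nonneg j),
      ← ENNReal.ofReal_mul (by positivity)]
    apply ENNReal.ofReal_le_ofReal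
    have hexp : Real.exp (ε * j) = Real.exp ε ^ j := by
      rw [mul_comm, Real.exp_nat_mul]
    rw [hexp, hρpow]
    apply le_of_eq
    rw [mul_pow]
    ring
  set KK : ℝ≥0∞ := M * ENNReal.ofReal ((1 + T.Cd) ^ 2) / μ T.base * ENNReal.ofReal Ct
    with hKKdef
  have hKKtop : KK ≠ ⊤ := by
    rw [hKKdef]
    apply ENNReal.mul_ne_top
    · exact (ENNReal.div_lt_top
        (ENNReal.mul_ne_top hMtop ENNReal.ofReal_ne_top)
        T.base_pos.ne').ne
    · exact ENNReal.ofReal_ne_top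
  have hKK0 : (0:ℝ) ≤ KK.toReal := ENNReal.toReal_nonneg
  refine ⟨KK.toReal + 1, by linarith, θ, hθ0, hθ1, ?_⟩
  intro n
  have hKKC : KK ≤ ENNReal.ofReal (KK.toReal + 1) :=
    calc KK = ENNReal.ofReal KK.toReal := (ENNReal.ofReal_toReal hKKtop).symm
      _ ≤ ENNReal.ofReal (KK.toReal + 1) := ENNReal.ofReal_le_ofReal (by linarith)
  rcases Nat.eq_zero_or_pos n with rfl | hn1
  · have hpre0 : (U^[0]) ⁻¹' T.base = T.base := by simp
    have hpt : ∀ x ∈ T.base,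
        ENNReal.ofReal (τ ^ T.retCount 0 x * Real.exp (ε * T.height x)) = 1 := by
      intro x hx
      rcases mem_iUnion.1 hx with ⟨m, hm⟩
      rw [T.retCount_zero_eq, T.height_spec 0 m x hm]
      norm_num
    rw [hpre0, setLIntegral_congr_fun T.base_meas hpt, setLIntegral_one]
    calc μ T.base ≤ 1 := T.base_le_one
      _ ≤ ENNReal.ofReal ((KK.toReal + 1) * θ ^ 0) := by
        rw [pow_zero, mul_one]
        exact ENNReal.one_le_ofReal.2 (by linarith)
  · set pre : Set Δ := (U^[n]) ⁻¹' T.base with hpredef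
    have hpre : MeasurableSet pre := T.base_meas.preimage (T.measurable_iterate n)
    set F : Δ → ℝ≥0∞ :=
      fun x => ENNReal.ofReal (τ ^ T.retCount n x * Real.exp (ε * T.height x)) with hFdef
    set G : ℕ × ℕ → ℝ≥0∞ := fun kp =>
      if kp.1 < T.r kp.2 then
        M * ENNReal.ofReal ((1 + T.Cd) ^ 2) / μ T.base * W ^ n *
          (ENNReal.ofReal (Real.exp (ε * T.r kp.2)) * μ (T.cell 0 kp.2))
      else 0 with hGdef
    have hterm : ∀ kp : ℕ × ℕ, ∫⁻ x in pre ∩ T.cell kp.1 kp.2, F x ∂μ ≤ G kp := by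
      intro kp
      rcases Nat.lt_or_ge kp.1 (T.r kp.2) with hk | hk
      swap
      · rw [T.cell_empty kp.1 kp.2 hk, Set.inter_empty]
        simp
      rcases Nat.lt_or_ge n (T.r kp.2 - kp.1) with hj | hj
      · have hempty : pre ∩ T.cell kp.1 kp.2 = ∅ := by
          rw [Set.eq_empty_iff_forall_notMem]
          rintro x ⟨hx1, hx2⟩
          exact T.iterate_not_mem_base hx2 hn1 (by omega) hx1
        rw [hempty]
        simp
      · have hiterpre : ∀ x : Δ,
            U^[n] x = U^[n - (T.r kp.2 - kp.1)] (U^[T.r kp.2 - kp.1] x) := by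
          intro x
          rw [← Function.iterate_add_apply]
          congr 1
          omega
        have hpoint : ∀ x ∈ T.cell kp.1 kp.2, pre.indicator F x
            = ENNReal.ofReal (τ * Real.exp (ε * kp.1)) *
              T.uu τ (n - (T.r kp.2 - kp.1)) (U^[T.r kp.2 - kp.1] x) := by
          intro x hx
          by_cases hmem : x ∈ pre
          · have hmem2 : U^[n] x ∈ T.base := hmem
            have hmem3 : U^[n - (T.r kp.2 - kp.1)] (U^[T.r kp.2 - kp.1] x) ∈ T.base := by
              rw [← hiterpre x]
              exact hmem2
            rw [Set.indicator_of_mem hmem, T.uu_eq_of_mem (Set.mem_preimage.2 hmem3)]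
            simp only [hFdef]
            rw [T.height_spec kp.1 kp.2 x hx, T.retCount_shift hk hx hj,
              ← ENNReal.ofReal_mul (by positivity)]
            congr 1
            rw [pow_add, pow_one]
            ring
          · have hmem2 : U^[n] x ∉ T.base := hmem
            have hmem3 : U^[n - (T.r kp.2 - kp.1)] (U^[T.r kp.2 - kp.1] x) ∉ T.base := by
              rw [← hiterpre x]
              exact hmem2
            rw [Set.indicator_of_notMem hmem,
              T.uu_eq_zero_of_not_mem (fun hc => hmem3 (Set.mem_preimage.1 hc)), mul_zero]
        have hZj : ENNReal.ofReal (Real.exp (ε * kp.1)) * Z ^ (T.r kp.2 - kp.1)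
            ≤ ENNReal.ofReal (Real.exp (ε * T.r kp.2)) := by
          have hc : kp.1 + (T.r kp.2 - kp.1) = T.r kp.2 := by omega
          calc ENNReal.ofReal (Real.exp (ε * kp.1)) * Z ^ (T.r kp.2 - kp.1)
              ≤ ENNReal.ofReal (Real.exp (ε * kp.1)) *
                  ENNReal.ofReal (Real.exp ε) ^ (T.r kp.2 - kp.1) :=
                mul_le_mul_right (pow_le_pow_left' hZe _) _
            _ = ENNReal.ofReal (Real.exp (ε * kp.1) * Real.exp ε ^ (T.r kp.2 - kp.1)) := by
                rw [← ENNReal.ofReal_pow (Real.exp_pos ε).le,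
                  ← ENNReal.ofReal_mul (by positivity)]
            _ = ENNReal.ofReal (Real.exp (ε * T.r kp.2)) := by
                congr 1
                rw [← Real.exp_nat_mul, ← Real.exp_add]
                congr 1
                have hcc : ((kp.1 : ℝ) + ((T.r kp.2 - kp.1 : ℕ) : ℝ)) = (T.r kp.2 : ℝ) := by
                  exact_mod_cast congrArg (Nat.cast (R := ℝ)) hc
                linear_combination ε * hcc
        have hWZ : W ^ (n - (T.r kp.2 - kp.1)) = W ^ n * Z ^ (T.r kp.2 - kp.1) := by
          calc W ^ (n - (T.r kp.2 - kp.1))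
              = W ^ (n - (T.r kp.2 - kp.1)) * (W * Z) ^ (T.r kp.2 - kp.1) := by
                rw [hZW, one_pow, mul_one]
            _ = W ^ (n - (T.r kp.2 - kp.1)) * W ^ (T.r kp.2 - kp.1) *
                  Z ^ (T.r kp.2 - kp.1) := by
                rw [mul_pow]
                ring
            _ = W ^ n * Z ^ (T.r kp.2 - kp.1) := by
                rw [← pow_add]
                have hnn : n - (T.r kp.2 - kp.1) + (T.r kp.2 - kp.1) = n := by omega
                rw [hnn]
        calc ∫⁻ x in pre ∩ T.cell kp.1 kp.2, F x ∂μ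
            = ∫⁻ x in T.cell kp.1 kp.2, pre.indicator F x ∂μ := by
              rw [lintegral_indicator hpre, Measure.restrict_restrict hpre]
          _ = ∫⁻ x in T.cell kp.1 kp.2,
                ENNReal.ofReal (τ * Real.exp (ε * kp.1)) *
                  T.uu τ (n - (T.r kp.2 - kp.1)) (U^[T.r kp.2 - kp.1] x) ∂μ :=
              setLIntegral_congr_fun (T.cell_meas _ _) hpoint
          _ = ENNReal.ofReal (τ * Real.exp (ε * kp.1)) *
                ∫⁻ y, T.uu τ (n - (T.r kp.2 - kp.1)) y ∂(T.lamM kp.2) := by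
              have hmeasuu : Measurable fun x =>
                  T.uu τ (n - (T.r kp.2 - kp.1)) (U^[T.r kp.2 - kp.1] x) :=
                (T.measurable_uu τ _).comp (T.measurable_iterate _)
              rw [lintegral_const_mul _ hmeasuu]
              congr 1
              rw [← T.map_iterate_restrict (p := kp.2) (k := kp.1) hk,
                lintegral_map (T.measurable_uu τ _) (T.measurable_iterate _)]
          _ ≤ ENNReal.ofReal (τ * Real.exp (ε * kp.1)) *
                ((ENNReal.ofReal ((1 + T.Cd) ^ 2) * μ (T.cell 0 kp.2) / μ T.base) *
                  (M * W ^ (n - (T.r kp.2 - kp.1)))) := by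
              apply mul_le_mul_right
              calc ∫⁻ y, T.uu τ (n - (T.r kp.2 - kp.1)) y ∂(T.lamM kp.2)
                  ≤ ∫⁻ y, T.uu τ (n - (T.r kp.2 - kp.1)) y
                      ∂((ENNReal.ofReal ((1 + T.Cd) ^ 2) * μ (T.cell 0 kp.2) / μ T.base) •
                        μ.restrict T.base) := lintegral_mono' (T.lamM_le_smul kp.2) le_rfl
                _ = (ENNReal.ofReal ((1 + T.Cd) ^ 2) * μ (T.cell 0 kp.2) / μ T.base) *
                      ∫⁻ y in T.base, T.uu τ (n - (T.r kp.2 - kp.1)) y ∂μ :=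
                    by rw [lintegral_smul_measure, smul_eq_mul]
                _ ≤ (ENNReal.ofReal ((1 + T.Cd) ^ 2) * μ (T.cell 0 kp.2) / μ T.base) *
                      (M * W ^ (n - (T.r kp.2 - kp.1))) :=
                    mul_le_mul_right (hBbound _) _
          _ ≤ ENNReal.ofReal (Real.exp (ε * kp.1)) *
                ((ENNReal.ofReal ((1 + T.Cd) ^ 2) * μ (T.cell 0 kp.2) / μ T.base) *
                  (M * W ^ (n - (T.r kp.2 - kp.1)))) := by
              apply mul_le_mul_left
              apply ENNReal.ofReal_le_ofReal
              nlinarith [Real.exp_pos (ε * (kp.1 : ℝ))]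
          _ = M * ENNReal.ofReal ((1 + T.Cd) ^ 2) / μ T.base * W ^ n *
                ((ENNReal.ofReal (Real.exp (ε * kp.1)) * Z ^ (T.r kp.2 - kp.1)) *
                  μ (T.cell 0 kp.2)) := by
              rw [hWZ]
              simp only [div_eq_mul_inv]
              ring
          _ ≤ M * ENNReal.ofReal ((1 + T.Cd) ^ 2) / μ T.base * W ^ n *
                (ENNReal.ofReal (Real.exp (ε * T.r kp.2)) * μ (T.cell 0 kp.2)) :=
              mul_le_mul_right (mul_le_mul_left hZj _) _
          _ = G kp := by
              rw [hGdef]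
              exact (if_pos hk).symm
    have hinner : ∀ p : ℕ, (∑' k : ℕ, G (k, p)) = (T.r p : ℝ≥0∞) *
        (M * ENNReal.ofReal ((1 + T.Cd) ^ 2) / μ T.base * W ^ n *
          (ENNReal.ofReal (Real.exp (ε * T.r p)) * μ (T.cell 0 p))) := by
      intro p
      rw [tsum_eq_sum (s := Finset.range (T.r p)) (fun k hk => by
        simp only [hGdef]
        exact if_neg (by simpa using hk))]
      have hcongr : ∀ k ∈ Finset.range (T.r p), G (k, p)
          = M * ENNReal.ofReal ((1 + T.Cd) ^ 2) / μ T.base * W ^ n *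
            (ENNReal.ofReal (Real.exp (ε * T.r p)) * μ (T.cell 0 p)) := by
        intro k hk
        simp only [hGdef]
        exact if_pos (Finset.mem_range.1 hk)
      rw [Finset.sum_congr rfl hcongr, Finset.sum_const, Finset.card_range, nsmul_eq_mul]
    have hGsum : (∑' kp : ℕ × ℕ, G kp)
        ≤ M * ENNReal.ofReal ((1 + T.Cd) ^ 2) / μ T.base * W ^ n * ENNReal.ofReal Ct := by
      rw [ENNReal.tsum_prod', ENNReal.tsum_comm]
      calc (∑' p, ∑' k, G (k, p))
          = ∑' p, (T.r p : ℝ≥0∞) *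
              (M * ENNReal.ofReal ((1 + T.Cd) ^ 2) / μ T.base * W ^ n *
                (ENNReal.ofReal (Real.exp (ε * T.r p)) * μ (T.cell 0 p))) :=
            tsum_congr hinner
        _ = (M * ENNReal.ofReal ((1 + T.Cd) ^ 2) / μ T.base * W ^ n) *
              ∑' p, ((T.r p : ℝ≥0∞) * ENNReal.ofReal (Real.exp (ε * T.r p))) *
                μ (T.cell 0 p) := by
            rw [← ENNReal.tsum_mul_left]
            refine tsum_congr fun p => ?_
            simp only [div_eq_mul_inv]
            ring
        _ ≤ (M * ENNReal.ofReal ((1 + T.Cd) ^ 2) / μ T.base * W ^ n) *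
              ENNReal.ofReal Ct := mul_le_mul_right hfiber2 _
    calc ∫⁻ x in pre, F x ∂μ
        = ∑' kp : ℕ × ℕ, ∫⁻ x in pre ∩ T.cell kp.1 kp.2, F x ∂μ :=
          T.lintegral_cell_partition hpre F
      _ ≤ ∑' kp, G kp := ENNReal.tsum_le_tsum hterm
      _ ≤ M * ENNReal.ofReal ((1 + T.Cd) ^ 2) / μ T.base * W ^ n * ENNReal.ofReal Ct :=
          hGsum
      _ = KK * W ^ n := by
          rw [hKKdef]
          simp only [div_eq_mul_inv]
          ring
      _ ≤ ENNReal.ofReal (KK.toReal + 1) * W ^ n := mul_le_mul_left hKKC _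
      _ = ENNReal.ofReal ((KK.toReal + 1) * θ ^ n) := by
          rw [hWθ, ← ENNReal.ofReal_pow hθ0.le, ← ENNReal.ofReal_mul (by linarith)]
end

section
/- Let U : Δ → Δ be an expanding Young tower with exponentially small tails, and let g : Δ → ℝ belong to L^p(μ) for every p < 2. Define G : Δ → ℝ by G(x) = ∑_{j=0}^{ω(x)−1} g(U^j π₀ x), where ω(x) is the height of x and π₀ the projection to the basis. Then G ∈ L^p(μ) for every p < 2. -/
open MeasureTheory Filter Set
open scoped ENNReal NNReal Topology Classical

/-! ### Auxiliary lemmas -/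

section Aux

variable {α : Type*} [MeasurableSpace α] {μ : Measure α}

/-- If `S ⊆ M` with `M` measurable of finite measure and `μ S + μ (M \ S) ≤ μ M`,
then `S` is null measurable. -/
lemma nullMeasurableSet_of_measure_add {S M : Set α} (hM : MeasurableSet M) (hSM : S ⊆ M)
    (hsum : μ S + μ (M \ S) ≤ μ M) (hfin : μ M ≠ ⊤) : NullMeasurableSet S μ := by
  set S' := toMeasurable μ S ∩ M with hS'def
  set T' := toMeasurable μ (M \ S) ∩ M with hT'def
  have hS'm : MeasurableSet S' := (measurableSet_toMeasurable μ S).inter hM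
  have hT'm : MeasurableSet T' := (measurableSet_toMeasurable μ (M \ S)).inter hM
  have hSS' : S ⊆ S' := Set.subset_inter (subset_toMeasurable μ S) hSM
  have hTT' : M \ S ⊆ T' := Set.subset_inter (subset_toMeasurable μ (M \ S)) Set.diff_subset
  have hS'measure : μ S' = μ S :=
    le_antisymm (le_trans (measure_mono Set.inter_subset_left) (measure_toMeasurable S).le)
      (measure_mono hSS')
  have hT'measure : μ T' = μ (M \ S) :=
    le_antisymm (le_trans (measure_mono Set.inter_subset_left) (measure_toMeasurable _).le)
      (measure_mono hTT')
  have hunion : S' ∪ T' = M := by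
    apply Set.Subset.antisymm (Set.union_subset Set.inter_subset_right Set.inter_subset_right)
    intro x hx
    by_cases hxS : x ∈ S
    · exact Or.inl (hSS' hxS)
    · exact Or.inr (hTT' ⟨hx, hxS⟩)
  have key : μ (S' ∩ T') = 0 := by
    have h1 : μ M + μ (S' ∩ T') = μ S' + μ T' := by
      conv_lhs => rw [← hunion]
      exact measure_union_add_inter S' hT'm
    have h2 : μ M + μ (S' ∩ T') ≤ μ M + 0 := by
      rw [h1, hS'measure, hT'measure, add_zero]; exact hsum
    have := (WithTop.add_le_add_iff_left hfin).1 h2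
    exact nonpos_iff_eq_zero.1 this
  have hdiff : μ (S' \ S) = 0 := by
    refine measure_mono_null (fun x hx => ?_) key
    refine ⟨hx.1, hTT' ⟨Set.inter_subset_right hx.1, hx.2⟩⟩
  refine hS'm.nullMeasurableSet.congr ?_
  rw [MeasureTheory.ae_eq_set]
  refine ⟨hdiff, ?_⟩
  rw [Set.diff_eq_empty.2 hSS']
  exact measure_empty

/-- A set which coincides on a measurable set `M` with a `μ`-null measurable set is
null measurable for `μ.restrict M`. -/
lemma nullMeasurableSet_restrict_of_inter {M W : Set α} (hM : MeasurableSet M)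
    (h : NullMeasurableSet (M ∩ W) μ) : NullMeasurableSet W (μ.restrict M) := by
  obtain ⟨V, hVm, hV⟩ := h
  refine hVm.nullMeasurableSet.congr ?_
  have h1 : (M ∩ W : Set α) =ᵐ[μ.restrict M] W := by
    rw [MeasureTheory.ae_eq_set]
    constructor
    · rw [Set.diff_eq_empty.2 Set.inter_subset_right]
      exact measure_empty
    · rw [Measure.restrict_apply' hM]
      refine measure_mono_null (fun x hx => ?_) (measure_empty (μ := μ))
      exact (hx.1.2 ⟨hx.2, hx.1.1⟩).elim
  have h2 : V =ᵐ[μ.restrict M] (M ∩ W : Set α) :=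
    (Filter.EventuallyEq.filter_mono hV.symm (ae_mono Measure.restrict_le_self))
  exact h2.trans h1

end Aux

namespace YoungTower

variable {Δ : Type*} [MeasurableSpace Δ] {μ : Measure Δ} {U : Δ → Δ} (T : YoungTower μ U)

lemma lt_r_of_mem {k p : ℕ} {x : Δ} (hx : x ∈ T.cell k p) : k < T.r p := by
  by_contra h
  rw [T.cell_empty k p (le_of_not_gt h)] at hx
  exact hx

lemma measurableSet_level (n : ℕ) : MeasurableSet (T.level n) :=
  MeasurableSet.iUnion fun p => T.cell_meas n p

lemma iUnion_level : ⋃ n, T.level n = Set.univ := by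
  ext x
  simp only [Set.mem_iUnion, Set.mem_univ, iff_true, level]
  obtain ⟨p, k, _, hx⟩ := T.cell_cover x
  exact ⟨k, p, hx⟩

lemma level_pairwise_disjoint : Pairwise (Function.onFun Disjoint fun n => T.level n) := by
  intro n m hnm
  refine Set.disjoint_iUnion_left.2 fun p => Set.disjoint_iUnion_right.2 fun q => ?_
  exact T.cell_disj n p m q (by simp [hnm])

lemma cell_pairwise_disjoint (n : ℕ) :
    Pairwise (Function.onFun Disjoint fun p => T.cell n p) := fun p q hpq =>
  T.cell_disj n p n q (by simp [hpq])

lemma height_eq {k p : ℕ} {x : Δ} (hx : x ∈ T.cell k p) : T.height x = k :=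
  T.height_spec k p x hx

lemma bijOn_iter (p j : ℕ) (d : ℕ) : j + d < T.r p →
    Set.BijOn (U^[d]) (T.cell j p) (T.cell (j + d) p) := by
  induction d with
  | zero =>
    intro _
    rw [Function.iterate_zero]
    simpa using Set.bijOn_id (T.cell j p)
  | succ d ih =>
    intro h
    have h2 := (T.map_up p (j + d) (by omega)).comp (ih (by omega))
    rw [Function.iterate_succ']
    exact h2

lemma bijOn_iter' (p : ℕ) {j n : ℕ} (hj : j ≤ n) (hn : n < T.r p) :
    Set.BijOn (U^[n - j]) (T.cell j p) (T.cell n p) := by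
  have := T.bijOn_iter p j (n - j) (by omega)
  rwa [show j + (n - j) = n from by omega] at this

/-- The image of a null subset of a cell is null. -/
lemma image_null (k p : ℕ) {N : Set Δ} (hN : N ⊆ T.cell k p) (h0 : μ N = 0) :
    μ (U '' N) = 0 := by
  set N' := toMeasurable μ N ∩ T.cell k p with hN'
  have hmono : U '' N ⊆ U '' N' :=
    Set.image_mono (Set.subset_inter (subset_toMeasurable μ N) hN)
  have hN'0 : μ N' = 0 :=
    measure_mono_null Set.inter_subset_left (by rw [measure_toMeasurable, h0])
  have : μ (U '' N') = 0 := by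
    rw [T.J_spec k p N' Set.inter_subset_right
      ((measurableSet_toMeasurable μ N).inter (T.cell_meas k p))]
    exact setLIntegral_measure_zero _ _ hN'0
  exact measure_mono_null hmono this

/-- measurable version of one-step measure-preserving image -/
lemma image_step_meas (p k : ℕ) (hk : k + 1 < T.r p) {A : Set Δ} (hA : A ⊆ T.cell k p)
    (hAm : MeasurableSet A) :
    NullMeasurableSet (U '' A) μ ∧ μ (U '' A) = μ A := by
  haveI := T.isProb
  have hmeasure : μ (U '' A) = μ A := T.map_up_measure p k hk A hA hAm
  refine ⟨?_, hmeasure⟩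
  set B := T.cell k p \ A with hB
  have hBm : MeasurableSet B := (T.cell_meas k p).diff hAm
  have hBmeasure : μ (U '' B) = μ B := T.map_up_measure p k hk B Set.diff_subset hBm
  have hcellmeasure : μ (T.cell (k+1) p) = μ (T.cell k p) := by
    rw [← (T.map_up p k hk).image_eq]
    exact T.map_up_measure p k hk _ subset_rfl (T.cell_meas k p)
  have hinj : Set.InjOn U (T.cell k p) := (T.map_up p k hk).injOn
  have himgA : U '' A ⊆ T.cell (k+1) p := by
    rw [← (T.map_up p k hk).image_eq]; exact Set.image_mono hA
  have hdiff : T.cell (k+1) p \ U '' A ⊆ U '' B := by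
    intro y hy
    obtain ⟨x, hx, rfl⟩ := (T.map_up p k hk).surjOn hy.1
    refine ⟨x, ⟨hx, fun hxA => hy.2 ⟨x, hxA, rfl⟩⟩, rfl⟩
  refine nullMeasurableSet_of_measure_add (T.cell_meas (k+1) p) himgA ?_ (measure_ne_top μ _)
  calc μ (U '' A) + μ (T.cell (k+1) p \ U '' A)
      ≤ μ (U '' A) + μ (U '' B) := add_le_add_right (measure_mono hdiff) _
    _ = μ A + μ B := by rw [hmeasure, hBmeasure]
    _ = μ (A ∪ T.cell k p) := measure_add_diff hAm.nullMeasurableSet _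
    _ = μ (T.cell k p) := by rw [Set.union_eq_self_of_subset_left hA]
    _ = μ (T.cell (k+1) p) := hcellmeasure.symm

/-- one-step measure-preserving image, null-measurable version -/
lemma image_step (p k : ℕ) (hk : k + 1 < T.r p) {A : Set Δ} (hA : A ⊆ T.cell k p)
    (hAnm : NullMeasurableSet A μ) :
    NullMeasurableSet (U '' A) μ ∧ μ (U '' A) = μ A := by
  obtain ⟨B, hBsub, hBm, hBA⟩ := hAnm.exists_measurable_subset_ae_eq
  have hdiffnull : μ (A \ B) = 0 := (MeasureTheory.ae_eq_set.1 hBA.symm).1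
  have hBcell : B ⊆ T.cell k p := hBsub.trans hA
  have hstep := T.image_step_meas p k hk hBcell hBm
  have himgnull : μ (U '' (A \ B)) = 0 :=
    T.image_null k p ((Set.diff_subset).trans hA) hdiffnull
  have hcover : U '' A ⊆ U '' B ∪ U '' (A \ B) := by
    rintro y ⟨x, hx, rfl⟩
    by_cases hxB : x ∈ B
    · exact Or.inl ⟨x, hxB, rfl⟩
    · exact Or.inr ⟨x, ⟨hx, hxB⟩, rfl⟩
  have hsub : U '' B ⊆ U '' A := Set.image_mono hBsub
  have hae : (U '' B : Set Δ) =ᵐ[μ] (U '' A : Set Δ) := by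
    rw [MeasureTheory.ae_eq_set]
    refine ⟨by simp [Set.diff_eq_empty.2 hsub], ?_⟩
    refine measure_mono_null ?_ himgnull
    intro y hy
    rcases hcover hy.1 with h | h
    · exact (hy.2 h).elim
    · exact h
  refine ⟨hstep.1.congr hae, ?_⟩
  rw [← measure_congr hae, hstep.2, measure_congr hBA]

lemma mem_cell_of_image {p j d : ℕ} (h : j + d < T.r p) {A : Set Δ} (hA : A ⊆ T.cell j p) :
    U^[d] '' A ⊆ T.cell (j + d) p := by
  refine (Set.image_mono hA).trans ?_
  rw [(T.bijOn_iter p j d h).image_eq]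

/-- iterated measure-preserving images of null measurable subsets of cells -/
lemma image_iter (p j : ℕ) {A : Set Δ} (hA : A ⊆ T.cell j p)
    (hAnm : NullMeasurableSet A μ) (d : ℕ) : j + d < T.r p →
    NullMeasurableSet (U^[d] '' A) μ ∧ μ (U^[d] '' A) = μ A := by
  induction d with
  | zero =>
    intro _
    rw [Function.iterate_zero, Set.image_id]
    exact ⟨hAnm, rfl⟩
  | succ d ih =>
    intro h
    obtain ⟨hnm, hmeas⟩ := ih (by omega)
    have hsub : U^[d] '' A ⊆ T.cell (j + d) p := T.mem_cell_of_image (by omega) hA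
    have hstep := T.image_step p (j + d) (by omega) hsub hnm
    rw [Function.iterate_succ', Set.image_comp]
    exact ⟨hstep.1, hstep.2.trans hmeas⟩

/-- iterated images of null subsets of cells are null -/
lemma image_iter_null (p j : ℕ) {N : Set Δ} (hN : N ⊆ T.cell j p) (h0 : μ N = 0) (d : ℕ) :
    j + d < T.r p → μ (U^[d] '' N) = 0 := by
  induction d with
  | zero =>
    intro _
    rw [Function.iterate_zero, Set.image_id]
    exact h0
  | succ d ih =>
    intro h
    have hsub : U^[d] '' N ⊆ T.cell (j + d) p := T.mem_cell_of_image (by omega) hN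
    rw [Function.iterate_succ', Set.image_comp]
    exact T.image_null (j + d) p hsub (ih (by omega))

/-- The key preimage identity for `ψ_j = U^[j] ∘ π₀` on a cell at height `n`. -/
lemma psi_preimage (p : ℕ) {j n : ℕ} (hj : j ≤ n) (hn : n < T.r p) (E : Set Δ) :
    T.cell n p ∩ (fun x => U^[j] (T.proj x)) ⁻¹' E = U^[n - j] '' (E ∩ T.cell j p) := by
  have hjr : 0 + j < T.r p := by omega
  ext x
  constructor
  · rintro ⟨hx, hE⟩
    obtain ⟨hproj, hUn⟩ := T.proj_spec n p x hx
    have hyj : U^[j] (T.proj x) ∈ T.cell j p := by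
      have := (T.bijOn_iter p 0 j hjr).mapsTo hproj
      simpa using this
    refine ⟨U^[j] (T.proj x), ⟨hE, hyj⟩, ?_⟩
    rw [← Function.iterate_add_apply, show n - j + j = n from by omega, hUn]
  · rintro ⟨y, ⟨hyE, hyc⟩, rfl⟩
    have hx : U^[n - j] y ∈ T.cell n p := (T.bijOn_iter' p hj hn).mapsTo hyc
    obtain ⟨hproj, hUn⟩ := T.proj_spec n p _ hx
    have hyj : U^[j] (T.proj (U^[n - j] y)) ∈ T.cell j p := by
      have := (T.bijOn_iter p 0 j hjr).mapsTo hproj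
      simpa using this
    have heq : U^[j] (T.proj (U^[n - j] y)) = y := by
      refine (T.bijOn_iter' p hj hn).injOn hyj hyc ?_
      rw [← Function.iterate_add_apply, show n - j + j = n from by omega, hUn]
    refine ⟨hx, ?_⟩
    show U^[j] (T.proj (U^[n - j] y)) ∈ E
    rw [heq]; exact hyE

/-- Measure and null measurability of `ψ_j` preimages. -/
lemma psi_measure (p : ℕ) {j n : ℕ} (hj : j ≤ n) (hn : n < T.r p) {E : Set Δ}
    (hE : MeasurableSet E) :
    NullMeasurableSet (T.cell n p ∩ (fun x => U^[j] (T.proj x)) ⁻¹' E) μ ∧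
      μ (T.cell n p ∩ (fun x => U^[j] (T.proj x)) ⁻¹' E) = μ (E ∩ T.cell j p) := by
  rw [T.psi_preimage p hj hn E]
  exact T.image_iter p j (Set.inter_subset_right)
    (hE.inter (T.cell_meas j p)).nullMeasurableSet (n - j) (by omega)

/-- a.e. measurability of `f ∘ ψ_j` on a cell. -/
lemma aemeasurable_psi_comp (p : ℕ) {j n : ℕ} (hj : j ≤ n) (hn : n < T.r p)
    {f : Δ → ℝ≥0∞} (hf : Measurable f) :
    AEMeasurable (fun x => f (U^[j] (T.proj x))) (μ.restrict (T.cell n p)) := by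
  refine NullMeasurable.aemeasurable (fun S hS => ?_)
  refine nullMeasurableSet_restrict_of_inter (T.cell_meas n p) ?_
  exact (T.psi_measure p hj hn (hf hS)).1

/-- Change of variables along `ψ_j` on a cell. -/
lemma lintegral_psi (p : ℕ) {j n : ℕ} (hj : j ≤ n) (hn : n < T.r p)
    {f : Δ → ℝ≥0∞} (hf : Measurable f) :
    ∫⁻ x in T.cell n p, f (U^[j] (T.proj x)) ∂μ = ∫⁻ y in T.cell j p, f y ∂μ := by
  have hu : AEMeasurable (fun x => f (U^[j] (T.proj x))) (μ.restrict (T.cell n p)) :=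
    T.aemeasurable_psi_comp p hj hn hf
  have hmap : (μ.restrict (T.cell n p)).map (fun x => f (U^[j] (T.proj x)))
      = (μ.restrict (T.cell j p)).map f := by
    ext S hS
    rw [Measure.map_apply_of_aemeasurable hu hS, Measure.map_apply hf hS,
      Measure.restrict_apply' (T.cell_meas n p), Measure.restrict_apply' (T.cell_meas j p)]
    have h := (T.psi_measure p hj hn (hf hS)).2
    rw [Set.inter_comm] at h
    exact h
  have h1 : ∫⁻ x in T.cell n p, f (U^[j] (T.proj x)) ∂μ
      = ∫⁻ y, y ∂((μ.restrict (T.cell n p)).map (fun x => f (U^[j] (T.proj x)))) :=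
    (lintegral_map' aemeasurable_id hu).symm
  have h2 : ∫⁻ y, y ∂((μ.restrict (T.cell j p)).map f) = ∫⁻ y in T.cell j p, f y ∂μ :=
    lintegral_map' aemeasurable_id hf.aemeasurable
  rw [h1, hmap, h2]


/-- Integral over the whole space as a sum over the levels. -/
lemma lintegral_eq_tsum_level (f : Δ → ℝ≥0∞) :
    ∫⁻ x, f x ∂μ = ∑' n, ∫⁻ x in T.level n, f x ∂μ := by
  conv_lhs => rw [← setLIntegral_univ f, ← T.iUnion_level]
  exact lintegral_iUnion T.measurableSet_level T.level_pairwise_disjoint f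

/-- Integral over a level as a sum over its cells. -/
lemma lintegral_level_eq_tsum_cell (n : ℕ) (f : Δ → ℝ≥0∞) :
    ∫⁻ x in T.level n, f x ∂μ = ∑' p, ∫⁻ x in T.cell n p, f x ∂μ :=
  lintegral_iUnion (T.cell_meas n) (T.cell_pairwise_disjoint n) f

/-- `x ↦ ∑_{j < ω(x)} h (U^j π₀ x)` is a.e. measurable for measurable `h`. -/
lemma aemeasurable_towerSum {h : Δ → ℝ} (hh : Measurable h) :
    AEMeasurable (fun x => ∑ j ∈ Finset.range (T.height x), h (U^[j] (T.proj x))) μ := by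
  refine NullMeasurable.aemeasurable (fun S hS => ?_)
  have hFn : ∀ n : ℕ, Measurable (fun y => ∑ j ∈ Finset.range n, h (U^[j] y)) := fun n =>
    Finset.measurable_sum _ fun j _ => hh.comp (T.measurable_U.iterate j)
  have hdecomp : (fun x => ∑ j ∈ Finset.range (T.height x), h (U^[j] (T.proj x))) ⁻¹' S
      = ⋃ (m : ℕ) (n : ℕ), T.cell n m ∩
          (fun x => U^[0] (T.proj x)) ⁻¹' ((fun y => ∑ j ∈ Finset.range n, h (U^[j] y)) ⁻¹' S) := by
    ext x
    simp only [Set.mem_preimage, Set.mem_iUnion, Set.mem_inter_iff]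
    constructor
    · intro hx
      obtain ⟨m, k, _, hxc⟩ := T.cell_cover x
      refine ⟨m, k, hxc, ?_⟩
      show (∑ j ∈ Finset.range k, h (U^[j] (T.proj x))) ∈ S
      rwa [← T.height_eq hxc]
    · rintro ⟨m, n, hxc, hxS⟩
      have := T.height_eq hxc
      rw [this]
      exact hxS
  rw [hdecomp]
  refine NullMeasurableSet.iUnion fun m => NullMeasurableSet.iUnion fun n => ?_
  by_cases hnr : n < T.r m
  · exact (T.psi_measure m (Nat.zero_le n) hnr ((hFn n) hS)).1
  · rw [T.cell_empty n m (by omega), Set.empty_inter]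
    exact MeasurableSet.empty.nullMeasurableSet

/-- The tower sums of two a.e. equal functions are a.e. equal. -/
lemma towerSum_congr_ae {g h : Δ → ℝ} (hgh : g =ᵐ[μ] h) :
    T.towerSum g =ᵐ[μ] (fun x => ∑ j ∈ Finset.range (T.height x), h (U^[j] (T.proj x))) := by
  set N := toMeasurable μ {y | g y ≠ h y} with hNdef
  have hNnull : μ N = 0 := by
    rw [hNdef, measure_toMeasurable]
    exact hgh
  have hNsub : {y | g y ≠ h y} ⊆ N := subset_toMeasurable μ _
  rw [Filter.EventuallyEq, ae_iff]
  have hpieces : μ (⋃ (m : ℕ) (n : ℕ) (j : ℕ),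
      if j ≤ n ∧ n < T.r m then U^[n - j] '' (N ∩ T.cell j m) else (∅ : Set Δ)) = 0 := by
    refine measure_iUnion_null fun m => measure_iUnion_null fun n =>
      measure_iUnion_null fun j => ?_
    by_cases hc : j ≤ n ∧ n < T.r m
    · rw [if_pos hc]
      exact T.image_iter_null m j Set.inter_subset_right
        (measure_mono_null Set.inter_subset_left hNnull) (n - j) (by omega)
    · rw [if_neg hc]
      exact measure_empty
  refine measure_mono_null (fun x hx => ?_) hpieces
  simp only [Set.mem_setOf_eq] at hx
  obtain ⟨m, k, hk, hxc⟩ := T.cell_cover x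
  have hht : T.height x = k := T.height_eq hxc
  have hexists : ∃ j < k, g (U^[j] (T.proj x)) ≠ h (U^[j] (T.proj x)) := by
    by_contra hcon
    push_neg at hcon
    refine hx ?_
    unfold YoungTower.towerSum
    rw [hht]
    exact Finset.sum_congr rfl fun j hj => hcon j (Finset.mem_range.1 hj)
  obtain ⟨j, hjk, hne⟩ := hexists
  have hmem : x ∈ T.cell k m ∩ (fun x => U^[j] (T.proj x)) ⁻¹' N :=
    ⟨hxc, hNsub hne⟩
  rw [T.psi_preimage m hjk.le hk N] at hmem
  refine Set.mem_iUnion.2 ⟨m, Set.mem_iUnion.2 ⟨k, Set.mem_iUnion.2 ⟨j, ?_⟩⟩⟩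
  rw [if_pos ⟨hjk.le, hk⟩]
  exact hmem

end YoungTower

section MainAux

variable {α : Type*} [MeasurableSpace α]

/-- Hölder-type bound: `∫ F^p ≤ (∫ F^q)^(p/q) (ν univ)^(1-p/q)` for `0 < p < q`. -/
lemma lintegral_rpow_le_rpow_mul (ν : Measure α) {F : α → ℝ≥0∞}
    (hF : AEMeasurable F ν) {p q : ℝ} (h0 : 0 < p) (hpq : p < q) :
    ∫⁻ x, F x ^ p ∂ν ≤ (∫⁻ x, F x ^ q ∂ν) ^ (p / q) * (ν Set.univ) ^ (1 - p / q) := by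
  have hq0 : 0 < q := h0.trans hpq
  have hr1 : 1 < q / p := (one_lt_div h0).2 hpq
  have hconj : (q / p).HolderConjugate (Real.conjExponent (q / p)) :=
    Real.HolderConjugate.conjExponent hr1
  have key := ENNReal.lintegral_mul_le_Lp_mul_Lq ν hconj (hF.pow_const p)
    (aemeasurable_const : AEMeasurable (fun _ => (1 : ℝ≥0∞)) ν)
  simp only [Pi.mul_apply, mul_one, ENNReal.one_rpow, lintegral_one] at key
  have h2 : ∀ x : α, (F x ^ p) ^ (q / p) = F x ^ q := fun x => by
    rw [← ENNReal.rpow_mul]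
    congr 1
    field_simp
  have h3 : (1 / (q / p)) = p / q := by
    field_simp
  have h4 : 1 / Real.conjExponent (q / p) = 1 - p / q := by
    have := hconj.inv_add_inv_eq_one
    have h5 : (Real.conjExponent (q / p))⁻¹ = 1 - (q/p)⁻¹ := by linarith
    rw [one_div, h5, inv_div]
  rw [h3, h4, lintegral_congr h2] at key
  exact key

/-- `(∑_{j<n} z_j)^q ≤ n^(q-1) ∑_{j<n} z_j^q` in `ℝ≥0∞`, for `q ≥ 1`. -/
lemma ennreal_rpow_sum_le {n : ℕ} (z : ℕ → ℝ≥0∞) {q : ℝ} (hq : 1 ≤ q) :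
    (∑ j ∈ Finset.range n, z j) ^ q
      ≤ (n : ℝ≥0∞) ^ (q - 1) * ∑ j ∈ Finset.range n, z j ^ q := by
  have hq0 : 0 < q := by linarith
  rcases Nat.eq_zero_or_pos n with rfl | hn
  · simp [ENNReal.zero_rpow_of_pos hq0]
  have hne : ((n : ℝ≥0∞)) ≠ 0 := Nat.cast_ne_zero.2 (by omega)
  have hnt : ((n : ℝ≥0∞)) ≠ ⊤ := ENNReal.natCast_ne_top n
  have hw : ∑ _j ∈ Finset.range n, ((n : ℝ≥0∞))⁻¹ = 1 := by
    rw [Finset.sum_const, Finset.card_range, nsmul_eq_mul, ENNReal.mul_inv_cancel hne hnt]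
  have hmean := ENNReal.rpow_arith_mean_le_arith_mean_rpow (Finset.range n)
    (fun _ => ((n : ℝ≥0∞))⁻¹) z hw hq
  have hsum : ∑ j ∈ Finset.range n, z j
      = (n : ℝ≥0∞) * ∑ j ∈ Finset.range n, ((n : ℝ≥0∞))⁻¹ * z j := by
    rw [← Finset.mul_sum, ← mul_assoc, ENNReal.mul_inv_cancel hne hnt, one_mul]
  calc (∑ j ∈ Finset.range n, z j) ^ q
      = (n : ℝ≥0∞) ^ q * (∑ j ∈ Finset.range n, ((n : ℝ≥0∞))⁻¹ * z j) ^ q := by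
        rw [hsum, ENNReal.mul_rpow_of_nonneg _ _ hq0.le]
    _ ≤ (n : ℝ≥0∞) ^ q * ∑ j ∈ Finset.range n, ((n : ℝ≥0∞))⁻¹ * z j ^ q :=
        mul_le_mul_right hmean _
    _ = (n : ℝ≥0∞) ^ q * (((n : ℝ≥0∞))⁻¹ * ∑ j ∈ Finset.range n, z j ^ q) := by
        congr 1
        rw [Finset.mul_sum]
    _ = (n : ℝ≥0∞) ^ (q - 1) * ∑ j ∈ Finset.range n, z j ^ q := by
        rw [← mul_assoc]
        congr 1
        rw [← ENNReal.rpow_neg_one (n : ℝ≥0∞), ← ENNReal.rpow_add _ _ hne hnt,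
          show q + -1 = q - 1 from by ring]

end MainAux
set_option maxHeartbeats 1600000 in
/-- Lemma `integrable`: on an expanding Young tower with exponentially small tails, if
`g ∈ L^p(μ)` for all `p < 2`, then `G(x) = ∑_{j<ω(x)} g(U^j π₀ x)` also belongs to
`L^p(μ)` for all `p < 2`. -/
theorem towerSum_memLp
    {Δ : Type*} [MeasurableSpace Δ] {μ : Measure Δ} {U : Δ → Δ}
    (T : YoungTower μ U)
    (C0 ρ : ℝ) (hC0 : 0 < C0) (hρ0 : 0 < ρ) (hρ1 : ρ < 1) (htails : T.ExpTails C0 ρ)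
    (g : Δ → ℝ)
    (hg : ∀ p : ℝ, 1 ≤ p → p < 2 → MemLp g (ENNReal.ofReal p) μ) :
    ∀ p : ℝ, 1 ≤ p → p < 2 → MemLp (T.towerSum g) (ENNReal.ofReal p) μ := by
  intro p hp1 hp2
  haveI := T.isProb
  have hp0 : 0 < p := by linarith
  obtain ⟨q, hq1, hq2, hpq⟩ : ∃ q : ℝ, 1 ≤ q ∧ q < 2 ∧ p < q :=
    ⟨(p + 2) / 2, by linarith, by linarith, by linarith⟩
  have hq0 : 0 < q := by linarith
  have hq1' : 1 < q := by linarith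
  have hθ1 : p / q < 1 := (div_lt_one hq0).2 hpq
  have hθ0 : 0 ≤ p / q := div_nonneg hp0.le hq0.le
  obtain ⟨θ, hθdef⟩ : ∃ θ : ℝ, θ = 1 - p / q := ⟨_, rfl⟩
  have hθpos : 0 < θ := by rw [hθdef]; linarith
  -- measurable representative of `g`
  have hgq := hg q hq1 hq2
  obtain ⟨h, hhsm, hgh⟩ := hgq.aestronglyMeasurable
  have hhm : Measurable h := hhsm.measurable
  set G : Δ → ℝ := fun x => ∑ j ∈ Finset.range (T.height x), h (U^[j] (T.proj x)) with hGdef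
  have hGae : T.towerSum g =ᵐ[μ] G := T.towerSum_congr_ae hgh
  have hGmeas : AEMeasurable G μ := T.aemeasurable_towerSum hhm
  have hGsm : AEStronglyMeasurable G μ := hGmeas.aestronglyMeasurable
  -- the `q`-integral of `h`
  set A : ℝ≥0∞ := ∫⁻ y, (‖h y‖₊ : ℝ≥0∞) ^ q ∂μ with hAdef
  have hAfin : A ≠ ⊤ := by
    have hmem : MemLp h (ENNReal.ofReal q) μ := hgq.ae_eq hgh
    have hlt := hmem.eLpNorm_lt_top
    rw [eLpNorm_eq_lintegral_rpow_enorm_toReal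
      (by simp only [ne_eq, ENNReal.ofReal_eq_zero, not_le]; linarith)
      ENNReal.ofReal_ne_top, ENNReal.toReal_ofReal hq0.le] at hlt
    intro hC
    rw [hAdef] at hC
    rw [show (∫⁻ (x : Δ), ‖h x‖ₑ ^ q ∂μ) = ⊤ from hC, ENNReal.top_rpow_of_pos (by positivity)] at hlt
    exact (lt_irrefl _ hlt).elim
  have hfq : Measurable fun y => (‖h y‖₊ : ℝ≥0∞) ^ q := hhm.enorm.pow_const q
  -- per-cell `q`-estimate
  have hcell : ∀ n m : ℕ, ∫⁻ x in T.cell n m, (‖G x‖₊ : ℝ≥0∞) ^ q ∂μ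
      ≤ (n : ℝ≥0∞) ^ (q - 1) *
        ∑ j ∈ Finset.range n, ∫⁻ y in T.cell j m, (‖h y‖₊ : ℝ≥0∞) ^ q ∂μ := by
    intro n m
    by_cases hnr : n < T.r m
    · have hpt : ∀ x ∈ T.cell n m, (‖G x‖₊ : ℝ≥0∞) ^ q
          ≤ (n : ℝ≥0∞) ^ (q - 1) *
            ∑ j ∈ Finset.range n, (‖h (U^[j] (T.proj x))‖₊ : ℝ≥0∞) ^ q := by
        intro x hx
        have hht : T.height x = n := T.height_eq hx
        have hGx : G x = ∑ j ∈ Finset.range n, h (U^[j] (T.proj x)) := by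
          simp only [hGdef]
          rw [hht]
        rw [hGx]
        calc ((‖∑ j ∈ Finset.range n, h (U^[j] (T.proj x))‖₊ : ℝ≥0∞)) ^ q
            ≤ (∑ j ∈ Finset.range n, (‖h (U^[j] (T.proj x))‖₊ : ℝ≥0∞)) ^ q := by
              apply ENNReal.rpow_le_rpow _ hq0.le
              rw [← ENNReal.coe_finset_sum]
              exact_mod_cast nnnorm_sum_le _ _
          _ ≤ (n : ℝ≥0∞) ^ (q - 1) *
              ∑ j ∈ Finset.range n, (‖h (U^[j] (T.proj x))‖₊ : ℝ≥0∞) ^ q :=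
            ennreal_rpow_sum_le _ hq1
      calc ∫⁻ x in T.cell n m, (‖G x‖₊ : ℝ≥0∞) ^ q ∂μ
          ≤ ∫⁻ x in T.cell n m, (n : ℝ≥0∞) ^ (q - 1) *
              ∑ j ∈ Finset.range n, (‖h (U^[j] (T.proj x))‖₊ : ℝ≥0∞) ^ q ∂μ :=
            setLIntegral_mono' (T.cell_meas n m) hpt
        _ = (n : ℝ≥0∞) ^ (q - 1) * ∫⁻ x in T.cell n m,
              ∑ j ∈ Finset.range n, (‖h (U^[j] (T.proj x))‖₊ : ℝ≥0∞) ^ q ∂μ :=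
            lintegral_const_mul' _ _ (ENNReal.rpow_ne_top_of_nonneg (by linarith)
              (ENNReal.natCast_ne_top n))
        _ = (n : ℝ≥0∞) ^ (q - 1) * ∑ j ∈ Finset.range n,
              ∫⁻ x in T.cell n m, (‖h (U^[j] (T.proj x))‖₊ : ℝ≥0∞) ^ q ∂μ := by
            congr 1
            exact lintegral_finset_sum' _ fun j hj =>
              T.aemeasurable_psi_comp m (le_of_lt (Finset.mem_range.1 hj)) hnr hfq
        _ = (n : ℝ≥0∞) ^ (q - 1) * ∑ j ∈ Finset.range n,
              ∫⁻ y in T.cell j m, (‖h y‖₊ : ℝ≥0∞) ^ q ∂μ := by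
            congr 1
            exact Finset.sum_congr rfl fun j hj =>
              T.lintegral_psi m (le_of_lt (Finset.mem_range.1 hj)) hnr hfq
    · rw [T.cell_empty n m (by omega), Measure.restrict_empty, lintegral_zero_measure]
      exact bot_le
  -- per-level `q`-estimate
  have hlevelq : ∀ n : ℕ, ∫⁻ x in T.level n, (‖G x‖₊ : ℝ≥0∞) ^ q ∂μ
      ≤ (n : ℝ≥0∞) ^ (q - 1) * n * A := by
    intro n
    calc ∫⁻ x in T.level n, (‖G x‖₊ : ℝ≥0∞) ^ q ∂μ
        = ∑' m, ∫⁻ x in T.cell n m, (‖G x‖₊ : ℝ≥0∞) ^ q ∂μ :=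
          T.lintegral_level_eq_tsum_cell n _
      _ ≤ ∑' m, ((n : ℝ≥0∞) ^ (q - 1) *
            ∑ j ∈ Finset.range n, ∫⁻ y in T.cell j m, (‖h y‖₊ : ℝ≥0∞) ^ q ∂μ) :=
          ENNReal.tsum_le_tsum fun m => hcell n m
      _ = (n : ℝ≥0∞) ^ (q - 1) * ∑' m,
            ∑ j ∈ Finset.range n, ∫⁻ y in T.cell j m, (‖h y‖₊ : ℝ≥0∞) ^ q ∂μ :=
          ENNReal.tsum_mul_left
      _ = (n : ℝ≥0∞) ^ (q - 1) * ∑ j ∈ Finset.range n,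
            ∑' m, ∫⁻ y in T.cell j m, (‖h y‖₊ : ℝ≥0∞) ^ q ∂μ := by
          congr 1
          exact Summable.tsum_finsetSum fun j _ => ENNReal.summable
      _ ≤ (n : ℝ≥0∞) ^ (q - 1) * ∑ j ∈ Finset.range n, A := by
          refine mul_le_mul_right (Finset.sum_le_sum fun j _ => ?_) _
          calc ∑' m, ∫⁻ y in T.cell j m, (‖h y‖₊ : ℝ≥0∞) ^ q ∂μ
              = ∫⁻ y in T.level j, (‖h y‖₊ : ℝ≥0∞) ^ q ∂μ :=
                (T.lintegral_level_eq_tsum_cell j _).symm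
            _ ≤ A := setLIntegral_le_lintegral _ _
      _ = (n : ℝ≥0∞) ^ (q - 1) * n * A := by
          rw [Finset.sum_const, Finset.card_range, nsmul_eq_mul, ← mul_assoc]
  -- per-level `p`-estimate via Hölder
  have hlevelp : ∀ n : ℕ, ∫⁻ x in T.level n, (‖G x‖₊ : ℝ≥0∞) ^ p ∂μ
      ≤ ((n : ℝ≥0∞) ^ (q - 1) * n * A) ^ (p / q) *
        (ENNReal.ofReal (C0 * ρ ^ n)) ^ θ := by
    intro n
    have hH := lintegral_rpow_le_rpow_mul (μ.restrict (T.level n))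
      (hGsm.enorm.restrict) hp0 hpq
    rw [Measure.restrict_apply_univ, ← hθdef] at hH
    exact hH.trans (mul_le_mul' (ENNReal.rpow_le_rpow (hlevelq n) hθ0)
      (ENNReal.rpow_le_rpow (htails n) hθpos.le))
  -- simplification of the bound
  have hnq : ∀ n : ℕ, ((n : ℝ≥0∞)) ^ (q - 1) * (n : ℝ≥0∞) = (n : ℝ≥0∞) ^ q := by
    intro n
    rcases Nat.eq_zero_or_pos n with rfl | hn
    · rw [Nat.cast_zero, mul_zero, ENNReal.zero_rpow_of_pos hq0]
    · have hne : ((n : ℝ≥0∞)) ≠ 0 := Nat.cast_ne_zero.2 (by omega)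
      have hnt : ((n : ℝ≥0∞)) ≠ ⊤ := ENNReal.natCast_ne_top n
      have hkey : ((n : ℝ≥0∞)) ^ (q - 1) * (n : ℝ≥0∞) ^ (1 : ℝ) = (n : ℝ≥0∞) ^ q := by
        rw [← ENNReal.rpow_add _ _ hne hnt, show q - 1 + 1 = q from by ring]
      rw [← hkey, ENNReal.rpow_one]
  have hbound : ∀ n : ℕ, ((n : ℝ≥0∞) ^ (q - 1) * n * A) ^ (p / q) *
        (ENNReal.ofReal (C0 * ρ ^ n)) ^ θ
      = (n : ℝ≥0∞) ^ p * A ^ (p / q) * ENNReal.ofReal ((C0 * ρ ^ n) ^ θ) := by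
    intro n
    rw [hnq n, ENNReal.mul_rpow_of_nonneg _ _ hθ0, ← ENNReal.rpow_mul,
      show q * (p / q) = p from by field_simp,
      ENNReal.ofReal_rpow_of_pos (by positivity)]
  -- summability of the geometric-type series
  have hρ'0 : 0 < ρ ^ θ := Real.rpow_pos_of_pos hρ0 θ
  have hρ'1 : ρ ^ θ < 1 := Real.rpow_lt_one hρ0.le hρ1 hθpos
  have hsummable : Summable fun n : ℕ => (n : ℝ) ^ (2 : ℕ) * (ρ ^ θ) ^ n := by
    simpa using summable_pow_mul_geometric_of_norm_lt_one 2
      (by rw [Real.norm_eq_abs, abs_of_pos hρ'0]; exact hρ'1)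
  have hS : ∑' n : ℕ, (n : ℝ≥0∞) ^ p * ENNReal.ofReal ((ρ ^ θ) ^ n) < ⊤ := by
    have hterm : ∀ n : ℕ, (n : ℝ≥0∞) ^ p * ENNReal.ofReal ((ρ ^ θ) ^ n)
        ≤ ENNReal.ofReal ((n : ℝ) ^ (2 : ℕ) * (ρ ^ θ) ^ n) := by
      intro n
      rcases Nat.eq_zero_or_pos n with rfl | hn
      · simp [ENNReal.zero_rpow_of_pos hp0]
      · rw [ENNReal.ofReal_mul (by positivity)]
        refine mul_le_mul' ?_ le_rfl
        calc (n : ℝ≥0∞) ^ p ≤ (n : ℝ≥0∞) ^ (2 : ℝ) :=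
              ENNReal.rpow_le_rpow_of_exponent_le (Nat.one_le_cast.2 hn) (by linarith)
          _ = ENNReal.ofReal ((n : ℝ) ^ (2 : ℕ)) := by
              rw [ENNReal.ofReal_pow (by positivity), ENNReal.ofReal_natCast,
                ← ENNReal.rpow_natCast]
              norm_num
    calc ∑' n : ℕ, (n : ℝ≥0∞) ^ p * ENNReal.ofReal ((ρ ^ θ) ^ n)
        ≤ ∑' n : ℕ, ENNReal.ofReal ((n : ℝ) ^ (2 : ℕ) * (ρ ^ θ) ^ n) :=
          ENNReal.tsum_le_tsum hterm
      _ = ENNReal.ofReal (∑' n : ℕ, (n : ℝ) ^ (2 : ℕ) * (ρ ^ θ) ^ n) :=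
          (ENNReal.ofReal_tsum_of_nonneg (fun n => by positivity) hsummable).symm
      _ < ⊤ := ENNReal.ofReal_lt_top
  -- assembling everything
  have hIfin : ∫⁻ x, (‖G x‖₊ : ℝ≥0∞) ^ p ∂μ < ⊤ := by
    rw [T.lintegral_eq_tsum_level fun x => (‖G x‖₊ : ℝ≥0∞) ^ p]
    have hfac : ∀ n : ℕ, (n : ℝ≥0∞) ^ p * A ^ (p / q) *
        ENNReal.ofReal ((C0 * ρ ^ n) ^ θ)
        = (A ^ (p / q) * ENNReal.ofReal (C0 ^ θ)) *
          ((n : ℝ≥0∞) ^ p * ENNReal.ofReal ((ρ ^ θ) ^ n)) := by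
      intro n
      rw [Real.mul_rpow hC0.le (by positivity), ← Real.rpow_natCast ρ n,
        ← Real.rpow_mul hρ0.le, mul_comm (n : ℝ) θ, Real.rpow_mul hρ0.le,
        Real.rpow_natCast, ENNReal.ofReal_mul (by positivity)]
      ring
    calc ∑' n, ∫⁻ x in T.level n, (‖G x‖₊ : ℝ≥0∞) ^ p ∂μ
        ≤ ∑' n : ℕ, ((n : ℝ≥0∞) ^ p * A ^ (p / q) * ENNReal.ofReal ((C0 * ρ ^ n) ^ θ)) :=
          ENNReal.tsum_le_tsum fun n => (hlevelp n).trans_eq (hbound n)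
      _ = (A ^ (p / q) * ENNReal.ofReal (C0 ^ θ)) *
          ∑' n : ℕ, ((n : ℝ≥0∞) ^ p * ENNReal.ofReal ((ρ ^ θ) ^ n)) := by
          rw [← ENNReal.tsum_mul_left]
          exact tsum_congr hfac
      _ < ⊤ := ENNReal.mul_lt_top
          (ENNReal.mul_lt_top (ENNReal.rpow_lt_top_of_nonneg hθ0 hAfin)
            ENNReal.ofReal_lt_top) hS
  refine ⟨hGsm.congr hGae.symm, ?_⟩
  rw [eLpNorm_congr_ae hGae,
    eLpNorm_eq_lintegral_rpow_enorm_toReal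
      (by simp only [ne_eq, ENNReal.ofReal_eq_zero, not_le]; linarith)
      ENNReal.ofReal_ne_top, ENNReal.toReal_ofReal hp0.le]
  exact ENNReal.rpow_lt_top_of_nonneg (by positivity) hIfin.ne
end
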